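/- arXiv:2411.19890 — 5 statements merged into one kernel-verified Lean document; each statement's English description precedes it below -/
import Mathlib

section
/- Let N : M_{d_A}(ℂ) → M_{d_B}(ℂ) be a quantum channel with d_A ≥ d_B that is not purity-preserving, i.e. there exists a unit vector φ ∈ ℂ^{d_A} such that N(|φ⟩⟨φ|) has rank at least 2. Then there exist an orthogonal projection P ∈ M_{d_A}(ℂ) with 1 ≤ rank(P) ≤ d_A − 1 and a unit vector ψ ∈ ℂ^{d_A} with Pψ = 0 such that the support (column space) of N(P) equals the support of N(P + |ψ⟩⟨ψ|). -/
open scoped Matrix ENNReal ComplexOrder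

noncomputable section

namespace RDPI

/-- A density matrix: positive semidefinite with trace one. -/
def IsDensity {d : ℕ} (ρ : Matrix (Fin d) (Fin d) ℂ) : Prop :=
  ρ.PosSemidef ∧ ρ.trace = 1

/-- The support (column space / range) of a matrix. -/
def supp {d : ℕ} (ρ : Matrix (Fin d) (Fin d) ℂ) : Submodule ℂ (Fin d → ℂ) :=
  LinearMap.range ρ.mulVecLin

/-- The Choi matrix `∑ᵢⱼ Eᵢⱼ ⊗ N(Eᵢⱼ)` of a linear map between matrix algebras. -/
def choi {dA dB : ℕ} (N : Matrix (Fin dA) (Fin dA) ℂ →ₗ[ℂ] Matrix (Fin dB) (Fin dB) ℂ) :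
    Matrix (Fin dA × Fin dB) (Fin dA × Fin dB) ℂ :=
  fun p q => N (Matrix.single p.1 q.1 1) p.2 q.2

/-- A quantum channel: completely positive (PSD Choi matrix) and trace preserving. -/
def IsQChannel {dA dB : ℕ}
    (N : Matrix (Fin dA) (Fin dA) ℂ →ₗ[ℂ] Matrix (Fin dB) (Fin dB) ℂ) : Prop :=
  (choi N).PosSemidef ∧ ∀ ρ, (N ρ).trace = ρ.trace

/-- Functional-calculus logarithm of a Hermitian matrix, taken on its support
(recall `Real.log 0 = 0`). Junk value `0` for non-Hermitian inputs. -/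
def matLog {d : ℕ} (A : Matrix (Fin d) (Fin d) ℂ) : Matrix (Fin d) (Fin d) ℂ :=
  if hA : A.IsHermitian then
    (hA.eigenvectorUnitary : Matrix (Fin d) (Fin d) ℂ) *
      Matrix.diagonal (fun i => (Real.log (hA.eigenvalues i) : ℂ)) *
      star (hA.eigenvectorUnitary : Matrix (Fin d) (Fin d) ℂ)
  else 0

open scoped Classical in
/-- Quantum relative entropy `D(ρ‖σ)`, valued in `[0,∞]`. -/
def relEnt {d : ℕ} (ρ σ : Matrix (Fin d) (Fin d) ℂ) : ℝ≥0∞ :=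
  if supp ρ ≤ supp σ then ENNReal.ofReal ((ρ * (matLog ρ - matLog σ)).trace.re) else ⊤

/-- The BKM metric `g_σ(X) = ∫₀^∞ Tr(X† (σ+r)⁻¹ X (σ+r)⁻¹) dr`, valued in `[0,∞]`. -/
def bkm {d : ℕ} (σ X : Matrix (Fin d) (Fin d) ℂ) : ℝ≥0∞ :=
  ∫⁻ r in Set.Ioi (0 : ℝ),
    ENNReal.ofReal ((Xᴴ * (σ + (r : ℂ) • 1)⁻¹ * X * (σ + (r : ℂ) • 1)⁻¹).trace.re)

/-! ### Auxiliary lemmas -/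

theorem aux_vecMulVec_mulVec {d : ℕ} (a b v : Fin d → ℂ) :
    (Matrix.vecMulVec a b).mulVec v = (b ⬝ᵥ v) • a := by
  ext i
  simp only [Matrix.mulVec, Matrix.vecMulVec_apply, dotProduct, Pi.smul_apply,
    smul_eq_mul, Finset.sum_mul]
  congr 1; ext j; ring

theorem aux_vecMulVec_mul_vecMulVec {d : ℕ} (a b c e : Fin d → ℂ) :
    Matrix.vecMulVec a b * Matrix.vecMulVec c e = (b ⬝ᵥ c) • Matrix.vecMulVec a e := by
  ext i j
  simp only [Matrix.mul_apply, Matrix.vecMulVec_apply, Matrix.smul_apply, smul_eq_mul,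
    dotProduct, Finset.sum_mul]
  exact Finset.sum_congr rfl fun k _ => by ring

theorem aux_vecMulVec_conjTranspose {d : ℕ} (x : Fin d → ℂ) :
    (Matrix.vecMulVec x (star x))ᴴ = Matrix.vecMulVec x (star x) := by
  ext i j
  simp [Matrix.vecMulVec_apply, Matrix.conjTranspose_apply, mul_comm]

theorem aux_sum_mulVec {d : ℕ} {α : Type*} (s : Finset α)
    (M : α → Matrix (Fin d) (Fin d) ℂ) (x : Fin d → ℂ) :
    (∑ i ∈ s, M i) *ᵥ x = ∑ i ∈ s, M i *ᵥ x := by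
  induction s using Finset.cons_induction with
  | empty => simp [Matrix.zero_mulVec]
  | cons a s ha ih => simp [Finset.sum_cons, Matrix.add_mulVec, ih]

theorem N_apply_entry {dA dB : ℕ} (N : Matrix (Fin dA) (Fin dA) ℂ →ₗ[ℂ] Matrix (Fin dB) (Fin dB) ℂ)
    (M : Matrix (Fin dA) (Fin dA) ℂ) (k l : Fin dB) :
    N M k l = ∑ i, ∑ j, M i j * choi N (i, k) (j, l) := by
  conv_lhs => rw [Matrix.matrix_eq_sum_single M]
  rw [map_sum]
  simp only [Matrix.sum_apply]
  congr 1; ext i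
  rw [map_sum]
  simp only [Matrix.sum_apply]
  congr 1; ext j
  have : Matrix.single i j (M i j) = M i j • Matrix.single i j 1 := by
    rw [Matrix.smul_single, smul_eq_mul, mul_one]
  rw [this, map_smul, Matrix.smul_apply, smul_eq_mul]
  rfl

theorem N_conjTranspose {dA dB : ℕ}
    (N : Matrix (Fin dA) (Fin dA) ℂ →ₗ[ℂ] Matrix (Fin dB) (Fin dB) ℂ)
    (hC : (choi N).IsHermitian) (M : Matrix (Fin dA) (Fin dA) ℂ) :
    (N M)ᴴ = N Mᴴ := by
  ext k l
  rw [Matrix.conjTranspose_apply, N_apply_entry, N_apply_entry]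
  rw [star_sum, Finset.sum_comm]
  congr 1; ext i
  rw [star_sum]
  congr 1; ext j
  rw [star_mul', Matrix.conjTranspose_apply]
  congr 1
  exact (hC.apply (j, k) (i, l))

theorem sum_swap4 {A B : Type*} [Fintype A] [Fintype B] (g : A → B → A → B → ℂ) :
    ∑ k : B, ∑ l : B, ∑ i : A, ∑ j : A, g i k j l
      = ∑ i : A, ∑ k : B, ∑ j : A, ∑ l : B, g i k j l := by
  calc ∑ k : B, ∑ l : B, ∑ i : A, ∑ j : A, g i k j l
      = ∑ k : B, ∑ i : A, ∑ l : B, ∑ j : A, g i k j l :=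
        Finset.sum_congr rfl (fun _ _ => Finset.sum_comm)
    _ = ∑ i : A, ∑ k : B, ∑ l : B, ∑ j : A, g i k j l := Finset.sum_comm
    _ = ∑ i : A, ∑ k : B, ∑ j : A, ∑ l : B, g i k j l :=
        Finset.sum_congr rfl (fun _ _ => Finset.sum_congr rfl (fun _ _ => Finset.sum_comm))

theorem N_rankOne_psd {dA dB : ℕ}
    (N : Matrix (Fin dA) (Fin dA) ℂ →ₗ[ℂ] Matrix (Fin dB) (Fin dB) ℂ)
    (hC : (choi N).PosSemidef) (ψ : Fin dA → ℂ) :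
    (N (Matrix.vecMulVec ψ (star ψ))).PosSemidef := by
  refine Matrix.PosSemidef.of_dotProduct_mulVec_nonneg ?_ ?_
  · show (N (Matrix.vecMulVec ψ (star ψ)))ᴴ = _
    rw [N_conjTranspose N hC.1]
    congr 1
    exact aux_vecMulVec_conjTranspose ψ
  · intro v
    set u : Fin dA × Fin dB → ℂ := fun p => star (ψ p.1) * v p.2 with hu
    have L : star v ⬝ᵥ (N (Matrix.vecMulVec ψ (star ψ))) *ᵥ v
        = ∑ k, ∑ l, ∑ i, ∑ j, ψ i * star (ψ j) * star (v k) * v l * choi N (i, k) (j, l) := by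
      simp only [dotProduct, Matrix.mulVec, N_apply_entry N, Pi.star_apply,
        Matrix.vecMulVec_apply, Finset.mul_sum, Finset.sum_mul]
      exact Finset.sum_congr rfl fun k _ => Finset.sum_congr rfl fun l _ =>
        Finset.sum_congr rfl fun i _ => Finset.sum_congr rfl fun j _ => by ring
    have R : star u ⬝ᵥ choi N *ᵥ u
        = ∑ i, ∑ k, ∑ j, ∑ l, ψ i * star (ψ j) * star (v k) * v l * choi N (i, k) (j, l) := by
      simp only [dotProduct, Matrix.mulVec, Fintype.sum_prod_type, hu, Pi.star_apply,
        star_mul', star_star, Finset.mul_sum, Finset.sum_mul]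
      exact Finset.sum_congr rfl fun i _ => Finset.sum_congr rfl fun k _ =>
        Finset.sum_congr rfl fun j _ => Finset.sum_congr rfl fun l _ => by ring
    rw [show star v ⬝ᵥ (N (Matrix.vecMulVec ψ (star ψ))) *ᵥ v = star u ⬝ᵥ choi N *ᵥ u from by
      rw [L, R, sum_swap4]]
    exact hC.dotProduct_mulVec_nonneg u

theorem symm_range_eq_ker_orthogonal {d : ℕ}
    (T : EuclideanSpace ℂ (Fin d) →ₗ[ℂ] EuclideanSpace ℂ (Fin d)) (hT : T.IsSymmetric) :
    LinearMap.range T = (LinearMap.ker T)ᗮ := by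
  have hle : LinearMap.range T ≤ (LinearMap.ker T)ᗮ := by
    rintro _ ⟨y, rfl⟩
    rw [Submodule.mem_orthogonal]
    intro z hz
    rw [← hT z y, LinearMap.mem_ker.mp hz, inner_zero_left]
  refine Submodule.eq_of_le_of_finrank_le hle ?_
  have h1 := LinearMap.finrank_range_add_finrank_ker T
  have h2 := Submodule.finrank_add_finrank_orthogonal (LinearMap.ker T)
  omega

theorem psd_ker_le {d : ℕ} {A B : Matrix (Fin d) (Fin d) ℂ}
    (hA : A.PosSemidef) (hB : B.PosSemidef) (x : Fin d → ℂ) (hx : (A + B) *ᵥ x = 0) :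
    A *ᵥ x = 0 := by
  have h0 : star x ⬝ᵥ A *ᵥ x + star x ⬝ᵥ B *ᵥ x = 0 := by
    rw [← dotProduct_add, ← Matrix.add_mulVec, hx, dotProduct_zero]
  have := (add_eq_zero_iff_of_nonneg (hA.dotProduct_mulVec_nonneg x) (hB.dotProduct_mulVec_nonneg x)).mp h0
  exact (hA.dotProduct_mulVec_zero_iff x).mp this.1

theorem psd_range_mono {d : ℕ} {A B : Matrix (Fin d) (Fin d) ℂ}
    (hA : A.PosSemidef) (hB : B.PosSemidef) :
    LinearMap.range A.mulVecLin ≤ LinearMap.range (A + B).mulVecLin := by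
  have hS : (A + B).PosSemidef := hA.add hB
  have hTA : (Matrix.toEuclideanLin A).IsSymmetric := Matrix.isHermitian_iff_isSymmetric.mp hA.1
  have hTS : (Matrix.toEuclideanLin (A + B)).IsSymmetric :=
    Matrix.isHermitian_iff_isSymmetric.mp hS.1
  have hker : LinearMap.ker (Matrix.toEuclideanLin (A + B)) ≤
      LinearMap.ker (Matrix.toEuclideanLin A) := by
    intro z hz
    rw [LinearMap.mem_ker] at hz ⊢
    exact WithLp.ofLp_injective 2 (psd_ker_le hA hB _ (congrArg WithLp.ofLp hz))
  have hr : LinearMap.range (Matrix.toEuclideanLin A) ≤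
      LinearMap.range (Matrix.toEuclideanLin (A + B)) := by
    rw [symm_range_eq_ker_orthogonal _ hTA, symm_range_eq_ker_orthogonal _ hTS]
    exact Submodule.orthogonal_le hker
  rintro x ⟨y, rfl⟩
  obtain ⟨z, hz⟩ := hr ⟨(WithLp.equiv 2 (Fin d → ℂ)).symm y, rfl⟩
  exact ⟨WithLp.equiv 2 (Fin d → ℂ) z, congrArg (WithLp.equiv 2 (Fin d → ℂ)) hz⟩

/-- a non-purity-preserving channel with `d_A ≥ d_B` admits a projection `P`
and an orthogonal unit vector `ψ` with `supp N(P) = supp N(P + |ψ⟩⟨ψ|)`. -/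
theorem exists_projection_same_support {dA dB : ℕ} (hd : dB ≤ dA)
    (N : Matrix (Fin dA) (Fin dA) ℂ →ₗ[ℂ] Matrix (Fin dB) (Fin dB) ℂ)
    (hN : IsQChannel N)
    (φ : Fin dA → ℂ) (hφ : star φ ⬝ᵥ φ = 1)
    (hrank : 2 ≤ (N (Matrix.vecMulVec φ (star φ))).rank) :
    ∃ (P : Matrix (Fin dA) (Fin dA) ℂ) (ψ : Fin dA → ℂ),
      P * P = P ∧ Pᴴ = P ∧ 1 ≤ P.rank ∧ P.rank ≤ dA - 1 ∧
      star ψ ⬝ᵥ ψ = 1 ∧ P.mulVec ψ = 0 ∧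
      supp (N P) = supp (N (P + Matrix.vecMulVec ψ (star ψ))) := by
  classical
  obtain ⟨hC, -⟩ := hN
  have hdB : 2 ≤ dB := le_trans hrank ((N _).rank_le_card_height.trans (by simp))
  have hdA2 : 2 ≤ dA := le_trans hdB hd
  haveI : NeZero dA := ⟨by omega⟩
  -- orthonormal basis extending φ
  set φ' : EuclideanSpace ℂ (Fin dA) := (WithLp.equiv 2 (Fin dA → ℂ)).symm φ with hφ'def
  have hφ'on : Orthonormal ℂ (({0} : Set (Fin dA)).restrict (fun _ : Fin dA => φ')) := by
    rw [orthonormal_iff_ite]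
    intro i j
    have hij : i = j := Subsingleton.elim i j
    rw [if_pos hij, hij]
    exact (EuclideanSpace.inner_eq_star_dotProduct φ' φ').trans ((dotProduct_comm _ _).trans hφ)
  obtain ⟨b, hb0⟩ := hφ'on.exists_orthonormalBasis_extension_of_card_eq (by simp)
  have hb0' : b 0 = φ' := hb0 0 rfl
  set u : Fin dA → (Fin dA → ℂ) := fun i => WithLp.equiv 2 (Fin dA → ℂ) (b i) with hudef
  have honu : ∀ i j, star (u i) ⬝ᵥ u j = if i = j then 1 else 0 := by
    intro i j
    have h := (orthonormal_iff_ite.mp b.orthonormal) i j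
    exact (dotProduct_comm _ _).trans ((EuclideanSpace.inner_eq_star_dotProduct _ _).symm.trans h)
  set r : Fin dA → Matrix (Fin dA) (Fin dA) ℂ :=
    fun i => Matrix.vecMulVec (u i) (star (u i)) with hrdef
  set P : ℕ → Matrix (Fin dA) (Fin dA) ℂ :=
    fun k => ∑ i ∈ Finset.univ.filter (fun i : Fin dA => (i : ℕ) < k), r i with hPdef
  -- basic facts about P
  have hmemf : ∀ (k : ℕ) (i : Fin dA),
      i ∈ Finset.univ.filter (fun i : Fin dA => (i : ℕ) < k) ↔ (i : ℕ) < k := by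
    intro k i; simp
  have hPsucc : ∀ (k : ℕ) (hk : k < dA), P (k + 1) = P k + r ⟨k, hk⟩ := by
    intro k hk
    have hins : Finset.univ.filter (fun i : Fin dA => (i : ℕ) < k + 1)
        = insert ⟨k, hk⟩ (Finset.univ.filter (fun i : Fin dA => (i : ℕ) < k)) := by
      ext i
      simp only [Finset.mem_filter, Finset.mem_univ, true_and, Finset.mem_insert]
      constructor
      · intro h
        rcases Nat.lt_succ_iff_lt_or_eq.mp h with h | h
        · exact Or.inr (by simp [h])
        · exact Or.inl (Fin.ext h)
      · rintro (rfl | h)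
        · exact Nat.lt_succ_self k
        · exact Nat.lt_succ_of_lt h
    have hnot : (⟨k, hk⟩ : Fin dA) ∉ Finset.univ.filter (fun i : Fin dA => (i : ℕ) < k) := by
      simp
    rw [hPdef]
    simp only
    rw [hins, Finset.sum_insert hnot, add_comm]
  have hrpsd : ∀ i, (N (r i)).PosSemidef := fun i => N_rankOne_psd N hC (u i)
  have hNPpsd : ∀ k, (N (P k)).PosSemidef := by
    intro k
    rw [hPdef]
    simp only
    rw [map_sum]
    exact Finset.sum_induction _ _ (fun a b ha hb => ha.add hb) Matrix.PosSemidef.zero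
      (fun i _ => hrpsd i)
  have hmono : ∀ (k : ℕ) (hk : k < dA), supp (N (P k)) ≤ supp (N (P (k + 1))) := by
    intro k hk
    rw [hPsucc k hk, map_add]
    exact psd_range_mono (hNPpsd k) (hrpsd _)
  -- P 1 is the rank-one projection onto φ
  have hu0 : u 0 = φ := by rw [hudef]; simp only; rw [hb0', hφ'def]; rfl
  have hP0 : P 0 = 0 := by
    rw [hPdef]; simp only
    rw [Finset.sum_eq_zero]
    intro i hi
    exact absurd ((hmemf 0 i).mp hi) (Nat.not_lt_zero _)
  have hP1 : P 1 = Matrix.vecMulVec φ (star φ) := by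
    have h0 : (0 : ℕ) < dA := by omega
    have : (⟨0, h0⟩ : Fin dA) = 0 := rfl
    rw [hPsucc 0 h0, hP0, zero_add, hrdef]
    simp only [this]
    rw [hu0]
  -- dimension function
  set g : ℕ → ℕ := fun k => Module.finrank ℂ (supp (N (P k))) with hgdef
  have hg1 : 2 ≤ g 1 := by
    rw [hgdef]; simp only
    rw [hP1]
    exact hrank
  -- the key existence of a non-increasing step
  have key : ∃ k, 1 ≤ k ∧ k + 1 ≤ dA ∧ supp (N (P k)) = supp (N (P (k + 1))) := by
    by_contra hcon
    push_neg at hcon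
    have hstrict : ∀ k, 1 ≤ k → k + 1 ≤ dA → g k < g (k + 1) := by
      intro k h1 h2
      exact Submodule.finrank_lt_finrank_of_lt
        (lt_of_le_of_ne (hmono k (by omega)) (hcon k h1 h2))
    have hgrow : ∀ k, 1 ≤ k → k ≤ dA → k + 1 ≤ g k := by
      intro k
      induction k with
      | zero => omega
      | succ n ih =>
        intro h1 h2
        rcases Nat.eq_or_lt_of_le h1 with h | h
        · rw [← h]; exact hg1
        · have hn1 : 1 ≤ n := by omega
          have := ih hn1 (by omega)
          have := hstrict n hn1 (by omega)
          omega
    have hbound : g dA ≤ dB := by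
      rw [hgdef]; simp only
      calc Module.finrank ℂ (supp (N (P dA))) ≤ Module.finrank ℂ (Fin dB → ℂ) :=
            Submodule.finrank_le _
        _ = dB := Module.finrank_fin_fun ℂ
    have := hgrow dA (by omega) le_rfl
    omega
  obtain ⟨k, hk1, hk2, hsupp⟩ := key
  have hkd : k < dA := by omega
  set ψ : Fin dA → ℂ := u ⟨k, hkd⟩ with hψdef
  refine ⟨P k, ψ, ?_, ?_, ?_, ?_, ?_, ?_, ?_⟩
  -- P k * P k = P k
  · rw [hPdef]; simp only
    rw [Finset.sum_mul_sum]
    have hrr : ∀ i j : Fin dA, r i * r j = if i = j then r i else 0 := by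
      intro i j
      rw [hrdef]; simp only
      rw [aux_vecMulVec_mul_vecMulVec, honu]
      split
      · next h => rw [h, one_smul]
      · rw [zero_smul]
    refine Finset.sum_congr rfl fun i hi => ?_
    rw [Finset.sum_congr rfl (fun j _ => hrr i j), Finset.sum_ite_eq]
    rw [if_pos hi]
  -- Hermitian
  · rw [hPdef]; simp only
    rw [Matrix.conjTranspose_sum]
    refine Finset.sum_congr rfl fun i _ => ?_
    rw [hrdef]; simp only
    exact aux_vecMulVec_conjTranspose (u i)
  -- rank ≥ 1
  · have h0k : (0 : ℕ) < k := by omega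
    have h0d : (0 : ℕ) < dA := by omega
    have hmv : (P k) *ᵥ u ⟨0, h0d⟩ = u ⟨0, h0d⟩ := by
      rw [hPdef]; simp only
      rw [aux_sum_mulVec]
      have : ∀ i ∈ Finset.univ.filter (fun i : Fin dA => (i : ℕ) < k),
          r i *ᵥ u ⟨0, h0d⟩ = if i = ⟨0, h0d⟩ then u ⟨0, h0d⟩ else 0 := by
        intro i hi
        rw [hrdef]; simp only
        rw [aux_vecMulVec_mulVec, honu]
        split
        · next h => rw [h, one_smul]
        · rw [zero_smul]
      rw [Finset.sum_congr rfl this, Finset.sum_ite_eq']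
      rw [if_pos ((hmemf k _).mpr h0k)]
    have hne : u ⟨0, h0d⟩ ≠ 0 := by
      intro h
      have := honu ⟨0, h0d⟩ ⟨0, h0d⟩
      rw [if_pos rfl, h] at this
      simp at this
    have hmem : u ⟨0, h0d⟩ ∈ LinearMap.range (P k).mulVecLin := ⟨u ⟨0, h0d⟩, hmv⟩
    rw [Matrix.rank]
    by_contra hcon
    push_neg at hcon
    interval_cases h : (Module.finrank ℂ (LinearMap.range (P k).mulVecLin))
    · have : LinearMap.range (P k).mulVecLin = ⊥ := Submodule.finrank_eq_zero.mp h
      rw [this] at hmem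
      exact hne (Submodule.mem_bot ℂ |>.mp hmem)
  -- rank ≤ dA - 1
  · have hsub : LinearMap.range (P k).mulVecLin ≤
        Submodule.span ℂ ((Finset.univ.filter (fun i : Fin dA => (i : ℕ) < k)).image u) := by
      rintro x ⟨y, rfl⟩
      have : (P k).mulVecLin y = ∑ i ∈ Finset.univ.filter (fun i : Fin dA => (i : ℕ) < k),
          (star (u i) ⬝ᵥ y) • u i := by
        show (P k) *ᵥ y = _
        rw [hPdef]; simp only
        rw [aux_sum_mulVec]
        exact Finset.sum_congr rfl fun i _ => by rw [hrdef]; exact aux_vecMulVec_mulVec _ _ _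
      rw [this]
      refine Submodule.sum_mem _ fun i hi => Submodule.smul_mem _ _ ?_
      exact Submodule.subset_span (Finset.mem_coe.mpr (Finset.mem_image_of_mem u hi))
    have h1 : (P k).rank ≤
        ((Finset.univ.filter (fun i : Fin dA => (i : ℕ) < k)).image u).card := by
      rw [Matrix.rank]
      exact le_trans (Submodule.finrank_mono hsub) (finrank_span_finset_le_card _)
    have h2 : ((Finset.univ.filter (fun i : Fin dA => (i : ℕ) < k)).image u).card ≤ k := by
      refine le_trans (Finset.card_image_le) ?_
      have : (Finset.univ.filter (fun i : Fin dA => (i : ℕ) < k)).card ≤ (Finset.range k).card := by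
        refine Finset.card_le_card_of_injOn (fun i => (i : ℕ)) ?_ ?_
        · intro i hi
          rw [Finset.mem_coe, Finset.mem_range]
          exact (hmemf k i).mp (Finset.mem_coe.mp hi)
        · intro i _ j _ h
          exact Fin.ext h
      simpa using this
    omega
  -- unit vector
  · rw [hψdef]
    have := honu ⟨k, hkd⟩ ⟨k, hkd⟩
    rwa [if_pos rfl] at this
  -- P ψ = 0
  · rw [hPdef, hψdef]; simp only
    rw [aux_sum_mulVec]
    refine Finset.sum_eq_zero fun i hi => ?_
    rw [hrdef]; simp only
    rw [aux_vecMulVec_mulVec, honu]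
    have : i ≠ ⟨k, hkd⟩ := by
      intro h
      have := (hmemf k i).mp hi
      rw [h] at this
      exact absurd this (lt_irrefl k)
    rw [if_neg this, zero_smul]
  -- support equality
  · have : P k + Matrix.vecMulVec ψ (star ψ) = P (k + 1) := by
      rw [hPsucc k hkd, hψdef, hrdef]
    rw [this]
    exact hsupp

end RDPI
end
end

section
/- Let ρ, σ be density matrices on ℂ^d such that ρ ≤ cσ for some c > 0, i.e. cσ − ρ is positive semidefinite. Then for every matrix X ∈ M_d(ℂ), g_ρ(X) ≥ (1/c) · g_σ(X), as values in [0,∞]. -/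
open scoped Matrix ENNReal ComplexOrder

noncomputable section

namespace RDPI

section Aux

open MeasureTheory
open scoped InnerProductSpace

variable {n : Type*} [Fintype n] [DecidableEq n]

open scoped MatrixOrder

lemma aux_trace_re_nonneg {A : Matrix n n ℂ} (hA : A.PosSemidef) : 0 ≤ A.trace.re := by
  have h : ∀ i, 0 ≤ (A i i).re := by
    intro i
    have := hA.diag_nonneg (i := i)
    exact (Complex.le_def.mp this).1
  simp only [Matrix.trace, Matrix.diag, Complex.re_sum]
  exact Finset.sum_nonneg fun i _ => h i

lemma aux_trace_mul_re_nonneg {A B : Matrix n n ℂ} (hA : A.PosSemidef) (hB : B.PosSemidef) :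
    0 ≤ (A * B).trace.re := by
  obtain ⟨C, rfl⟩ : ∃ C : Matrix n n ℂ, B = Cᴴ * C := by
    have hB0 : 0 ≤ B := Matrix.nonneg_iff_posSemidef.mpr hB
    refine ⟨CFC.sqrt B, ?_⟩
    rw [← Matrix.star_eq_conjTranspose, (CFC.sqrt_nonneg B).isSelfAdjoint.star_eq,
      CFC.sqrt_mul_sqrt_self B hB0]
  have h1 : (A * (Cᴴ * C)).trace = (C * A * Cᴴ).trace := by
    rw [← mul_assoc, Matrix.trace_mul_cycle]
  rw [h1]
  exact aux_trace_re_nonneg (hA.mul_mul_conjTranspose_same C)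

lemma aux_eig_ge_one {C : Matrix n n ℂ} (hC : C.IsHermitian) (h1 : (C - 1).PosSemidef) (i : n) :
    1 ≤ hC.eigenvalues i := by
  set v : EuclideanSpace ℂ n := hC.eigenvectorBasis i with hv
  have hv1 : dotProduct (star (v : n → ℂ)) (v : n → ℂ) = 1 := by
    have hn : ‖v‖ = 1 := hC.eigenvectorBasis.orthonormal.1 i
    have h2 : (inner ℂ v v : ℂ) = 1 := by
      rw [inner_self_eq_norm_sq_to_K, hn]; norm_num
    rwa [EuclideanSpace.inner_eq_star_dotProduct, dotProduct_comm] at h2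
  have hmul : C *ᵥ (v : n → ℂ) = (hC.eigenvalues i : ℝ) • (v : n → ℂ) :=
    hC.mulVec_eigenvectorBasis i
  have h0 := h1.dotProduct_mulVec_nonneg (v : n → ℂ)
  rw [Matrix.sub_mulVec, Matrix.one_mulVec, dotProduct_sub, hmul,
    dotProduct_smul, hv1] at h0
  have h3 : (0:ℂ) ≤ ((hC.eigenvalues i - 1 : ℝ) : ℂ) := by
    push_cast
    simpa using h0
  rw [Complex.zero_le_real] at h3
  linarith

lemma aux_one_sub_inv_posSemidef {C : Matrix n n ℂ} (hC : C.IsHermitian)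
    (h1 : (C - 1).PosSemidef) : (1 - C⁻¹).PosSemidef := by
  have hlam := aux_eig_ge_one hC h1
  set U : Matrix n n ℂ := (hC.eigenvectorUnitary : Matrix n n ℂ) with hUdef
  have hUU : U * star U = 1 := Matrix.mem_unitaryGroup_iff.mp hC.eigenvectorUnitary.2
  have hUU' : star U * U = 1 := Matrix.mem_unitaryGroup_iff'.mp hC.eigenvectorUnitary.2
  have hst : C = U * Matrix.diagonal (fun i => (hC.eigenvalues i : ℂ)) * star U :=
    hC.spectral_theorem
  have hne : ∀ i, (hC.eigenvalues i : ℂ) ≠ 0 := fun i => by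
    have : (0:ℝ) < hC.eigenvalues i := lt_of_lt_of_le one_pos (hlam i)
    exact_mod_cast this.ne'
  have hDD : Matrix.diagonal (fun i => (hC.eigenvalues i : ℂ)) *
      Matrix.diagonal (fun i => ((hC.eigenvalues i : ℂ))⁻¹) = 1 := by
    rw [Matrix.diagonal_mul_diagonal,
      show (fun i => (hC.eigenvalues i : ℂ) * ((hC.eigenvalues i : ℂ))⁻¹) = fun _ => (1:ℂ) from
        funext fun i => mul_inv_cancel₀ (hne i), Matrix.diagonal_one]
  have conj_mul : ∀ D E : Matrix n n ℂ,
      (U * D * star U) * (U * E * star U) = U * (D * E) * star U := by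
    intro D E
    simp only [mul_assoc]
    rw [← mul_assoc (star U) U, hUU', one_mul]
  have hinv : C⁻¹ = U * Matrix.diagonal (fun i => ((hC.eigenvalues i : ℂ))⁻¹) * star U := by
    apply Matrix.inv_eq_right_inv
    nth_rewrite 1 [hst]
    rw [conj_mul, hDD, mul_one, hUU]
  have hdiag : Matrix.diagonal (fun i => (((1:ℝ) - (hC.eigenvalues i)⁻¹ : ℝ) : ℂ)) =
      1 - Matrix.diagonal (fun i => ((hC.eigenvalues i : ℂ))⁻¹) := by
    rw [← Matrix.diagonal_one, Matrix.diagonal_sub]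
    funext i
    push_cast
    ring
  have key : 1 - C⁻¹ =
      U * Matrix.diagonal (fun i => (((1:ℝ) - (hC.eigenvalues i)⁻¹ : ℝ) : ℂ)) * star U := by
    rw [hinv, hdiag, mul_sub, sub_mul, mul_one, hUU]
  rw [key, Matrix.star_eq_conjTranspose]
  refine Matrix.PosSemidef.mul_mul_conjTranspose_same ?_ U
  refine Matrix.PosSemidef.diagonal fun i => ?_
  refine Complex.zero_le_real.mpr ?_
  have h1' : (hC.eigenvalues i)⁻¹ ≤ 1 := inv_le_one_of_one_le₀ (hlam i)
  linarith

lemma aux_inv_anti {A B : Matrix n n ℂ} (hA : A.PosDef) (hB : B.PosDef)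
    (h : (B - A).PosSemidef) : (A⁻¹ - B⁻¹).PosSemidef := by
  have hAinv : A⁻¹.PosDef := hA.inv
  set S : Matrix n n ℂ := CFC.sqrt A⁻¹ with hSdef
  have hSH : S.IsHermitian := (CFC.sqrt_nonneg A⁻¹).isSelfAdjoint
  have hSS : S * S = A⁻¹ := CFC.sqrt_mul_sqrt_self A⁻¹ (Matrix.nonneg_iff_posSemidef.mpr hAinv.posSemidef)
  have hAdet : IsUnit A.det := hA.isUnit.map Matrix.detMonoidHom
  have hSdet : IsUnit S.det := by
    have : IsUnit (S.det * S.det) := by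
      rw [← Matrix.det_mul, hSS]
      exact hAinv.isUnit.map Matrix.detMonoidHom
    exact isUnit_of_mul_isUnit_left this
  have hSinv : S * S⁻¹ = 1 := Matrix.mul_nonsing_inv S hSdet
  have hSinv' : S⁻¹ * S = 1 := Matrix.nonsing_inv_mul S hSdet
  have hSAS : S * A * S = 1 := by
    have hA' : A = S⁻¹ * S⁻¹ := by
      rw [← Matrix.mul_inv_rev, hSS, Matrix.nonsing_inv_nonsing_inv A hAdet]
    rw [hA', show S * (S⁻¹ * S⁻¹) * S = (S * S⁻¹) * (S⁻¹ * S) from by noncomm_ring,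
      hSinv, hSinv', one_mul]
  set C : Matrix n n ℂ := S * B * S with hCdef
  have hCH : C.IsHermitian := by
    have : Cᴴ = C := by
      simp only [hCdef, Matrix.conjTranspose_mul, hSH.eq, hB.isHermitian.eq, mul_assoc]
    exact this
  have h1 : (C - 1).PosSemidef := by
    have : C - 1 = Sᴴ * (B - A) * S := by
      rw [hSH.eq, hCdef, ← hSAS]
      noncomm_ring
    rw [this]
    exact h.conjTranspose_mul_mul_same S
  have hCinv : C⁻¹ = S⁻¹ * B⁻¹ * S⁻¹ := by
    rw [hCdef, Matrix.mul_inv_rev, Matrix.mul_inv_rev]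
    noncomm_ring
  have hmain := aux_one_sub_inv_posSemidef hCH h1
  have key : A⁻¹ - B⁻¹ = Sᴴ * (1 - C⁻¹) * S := by
    rw [hSH.eq, hCinv]
    have expand : S * (1 - S⁻¹ * B⁻¹ * S⁻¹) * S =
        S * S - (S * S⁻¹) * B⁻¹ * (S⁻¹ * S) := by noncomm_ring
    rw [expand, hSinv, hSinv', hSS, one_mul, mul_one]
  rw [key]
  exact hmain.conjTranspose_mul_mul_same S

lemma aux_trace_cmp {A B : Matrix n n ℂ} (hA : A.PosDef) (hB : B.PosDef)
    (h : (B - A).PosSemidef) (X : Matrix n n ℂ) :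
    (Xᴴ * B⁻¹ * X * B⁻¹).trace.re ≤ (Xᴴ * A⁻¹ * X * A⁻¹).trace.re := by
  have hD : (A⁻¹ - B⁻¹).PosSemidef := aux_inv_anti hA hB h
  have t1 : 0 ≤ ((Xᴴ * A⁻¹ * X) * (A⁻¹ - B⁻¹)).trace.re :=
    aux_trace_mul_re_nonneg (hA.inv.posSemidef.conjTranspose_mul_mul_same X) hD
  have t2 : 0 ≤ ((Xᴴ * (A⁻¹ - B⁻¹) * X) * B⁻¹).trace.re :=
    aux_trace_mul_re_nonneg (hD.conjTranspose_mul_mul_same X) hB.inv.posSemidef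
  have key : Xᴴ * A⁻¹ * X * A⁻¹ =
      Xᴴ * B⁻¹ * X * B⁻¹ + (Xᴴ * A⁻¹ * X) * (A⁻¹ - B⁻¹) + (Xᴴ * (A⁻¹ - B⁻¹) * X) * B⁻¹ := by
    noncomm_ring
  rw [key, Matrix.trace_add, Matrix.trace_add, Complex.add_re, Complex.add_re]
  linarith

lemma aux_lintegral_Ioi_comp_div {c : ℝ} (hc : 0 < c) (g : ℝ → ℝ≥0∞) :
    ∫⁻ r in Set.Ioi (0:ℝ), g (r / c) = ENNReal.ofReal c * ∫⁻ s in Set.Ioi (0:ℝ), g s := by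
  have hc' : c ≠ 0 := hc.ne'
  set e : ℝ ≃ᵐ ℝ := MeasurableEquiv.mulLeft₀ c hc' with he
  have hecoe : ⇑e = (c * ·) := MeasurableEquiv.coe_mulLeft₀ hc'
  have hpre : e ⁻¹' Set.Ioi 0 = Set.Ioi 0 := by
    rw [hecoe]
    ext x
    simp only [Set.mem_preimage, Set.mem_Ioi]
    exact mul_pos_iff_of_pos_left hc
  have h1 : ∫⁻ s in Set.Ioi (0:ℝ), g s
      = ∫⁻ r, (fun x => g (x / c)) r ∂(Measure.map e (volume.restrict (Set.Ioi 0))) := by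
    rw [MeasureTheory.lintegral_map_equiv]
    refine lintegral_congr fun s => ?_
    simp only [hecoe]
    rw [mul_div_cancel_left₀ _ hc']
  have hm : Measure.map e volume = ENNReal.ofReal c⁻¹ • volume := by
    rw [hecoe, Real.map_volume_mul_left hc', abs_of_pos (inv_pos.mpr hc)]
  have h2 : Measure.map e (volume.restrict (Set.Ioi 0))
      = ENNReal.ofReal c⁻¹ • volume.restrict (Set.Ioi 0) := by
    calc Measure.map e (volume.restrict (Set.Ioi 0))
        = Measure.map e (volume.restrict (e ⁻¹' (Set.Ioi 0))) := by rw [hpre]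
      _ = (Measure.map e volume).restrict (Set.Ioi 0) :=
          (Measure.restrict_map e.measurable measurableSet_Ioi).symm
      _ = ENNReal.ofReal c⁻¹ • volume.restrict (Set.Ioi 0) := by
          rw [hm, Measure.restrict_smul]
  rw [h2, lintegral_smul_measure, smul_eq_mul] at h1
  rw [h1, ← mul_assoc, ← ENNReal.ofReal_mul hc.le, mul_inv_cancel₀ hc',
    ENNReal.ofReal_one, one_mul]

lemma aux_smul_one_posDef {r : ℝ} (hr : 0 < r) : ((r : ℂ) • (1 : Matrix n n ℂ)).PosDef := by
  rw [Matrix.smul_one_eq_diagonal]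
  exact Matrix.PosDef.diagonal fun i => Complex.zero_lt_real.mpr hr

end Aux

open MeasureTheory in
/-- if `ρ ≤ c σ` then `g_ρ(X) ≥ (1/c) g_σ(X)`. -/
theorem bkm_comparison_of_le {d : ℕ} {ρ σ : Matrix (Fin d) (Fin d) ℂ}
    (hρ : IsDensity ρ) (hσ : IsDensity σ) {c : ℝ} (hc : 0 < c)
    (hle : ((c : ℂ) • σ - ρ).PosSemidef) :
    ∀ X : Matrix (Fin d) (Fin d) ℂ,
      ENNReal.ofReal (1 / c) * bkm σ X ≤ bkm ρ X := by
  intro X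
  have hcC : ((c : ℝ) : ℂ) ≠ 0 := by exact_mod_cast hc.ne'
  have hcσ : ((c : ℂ) • σ).PosSemidef := by
    have h' : ((c : ℂ) • σ - ρ) + ρ = (c : ℂ) • σ := sub_add_cancel _ _
    rw [← h']
    exact hle.add hρ.1
  -- the "middle" integrand, with base matrix c•σ
  set F : ℝ → ℝ≥0∞ := fun r => ENNReal.ofReal
    ((Xᴴ * ((c : ℂ) • σ + (r : ℂ) • 1)⁻¹ * X * ((c : ℂ) • σ + (r : ℂ) • 1)⁻¹).trace.re) with hF
  set G : ℝ → ℝ≥0∞ := fun s => ENNReal.ofReal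
    ((Xᴴ * (σ + (s : ℂ) • 1)⁻¹ * X * (σ + (s : ℂ) • 1)⁻¹).trace.re) with hG
  -- Step 1 : pointwise comparison for r > 0
  have step1 : ∫⁻ r in Set.Ioi (0:ℝ), F r ≤ bkm ρ X := by
    refine lintegral_mono_ae (((ae_restrict_mem measurableSet_Ioi)).mono fun r hr => ?_)
    have hr : (0:ℝ) < r := hr
    have hA : (ρ + (r : ℂ) • 1).PosDef := Matrix.PosDef.posSemidef_add hρ.1 (aux_smul_one_posDef hr)
    have hB : ((c : ℂ) • σ + (r : ℂ) • 1).PosDef := Matrix.PosDef.posSemidef_add hcσ (aux_smul_one_posDef hr)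
    have hBA : (((c : ℂ) • σ + (r : ℂ) • 1) - (ρ + (r : ℂ) • 1)).PosSemidef := by
      rw [add_sub_add_right_eq_sub]
      exact hle
    exact ENNReal.ofReal_le_ofReal (aux_trace_cmp hA hB hBA X)
  -- Step 2 : rewrite F on Ioi 0 in terms of G
  have step2 : ∫⁻ r in Set.Ioi (0:ℝ), F r
      = ∫⁻ r in Set.Ioi (0:ℝ), ENNReal.ofReal (c⁻¹ * c⁻¹) * G (r / c) := by
    refine setLIntegral_congr_fun measurableSet_Ioi (fun r hr => ?_)
    have hrc : (0:ℝ) < r / c := div_pos hr hc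
    have hM : (σ + ((r / c : ℝ) : ℂ) • 1).PosDef := Matrix.PosDef.posSemidef_add hσ.1 (aux_smul_one_posDef hrc)
    have hsmul : (c : ℂ) • σ + (r : ℂ) • 1 = (c : ℂ) • (σ + ((r / c : ℝ) : ℂ) • 1) := by
      rw [smul_add, smul_smul]
      congr 2
      push_cast
      field_simp
    have hdet : IsUnit (σ + ((r / c : ℝ) : ℂ) • 1).det := hM.isUnit.map Matrix.detMonoidHom
    letI : Invertible ((c : ℝ) : ℂ) := invertibleOfNonzero hcC
    have hinv : ((c : ℂ) • σ + (r : ℂ) • 1)⁻¹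
        = ((c : ℝ) : ℂ)⁻¹ • (σ + ((r / c : ℝ) : ℂ) • 1)⁻¹ := by
      rw [hsmul, Matrix.inv_smul (k := ((c : ℝ) : ℂ)) (A := σ + ((r / c : ℝ) : ℂ) • 1) hdet, invOf_eq_inv _]
    have htr : (Xᴴ * ((c : ℂ) • σ + (r : ℂ) • 1)⁻¹ * X * ((c : ℂ) • σ + (r : ℂ) • 1)⁻¹).trace.re
        = (c⁻¹ * c⁻¹) *
          (Xᴴ * (σ + ((r / c : ℝ) : ℂ) • 1)⁻¹ * X * (σ + ((r / c : ℝ) : ℂ) • 1)⁻¹).trace.re := by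
      rw [hinv]
      rw [show Xᴴ * (((c : ℝ) : ℂ)⁻¹ • (σ + ((r / c : ℝ) : ℂ) • 1)⁻¹) * X *
            (((c : ℝ) : ℂ)⁻¹ • (σ + ((r / c : ℝ) : ℂ) • 1)⁻¹)
          = (((c : ℝ) : ℂ)⁻¹ * ((c : ℝ) : ℂ)⁻¹) •
            (Xᴴ * (σ + ((r / c : ℝ) : ℂ) • 1)⁻¹ * X * (σ + ((r / c : ℝ) : ℂ) • 1)⁻¹) from by
        simp only [Matrix.mul_smul, Matrix.smul_mul, smul_smul], Matrix.trace_smul]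
      rw [smul_eq_mul, ← Complex.ofReal_inv, ← Complex.ofReal_mul, Complex.re_ofReal_mul]
    show ENNReal.ofReal
        ((Xᴴ * ((c : ℂ) • σ + (r : ℂ) • 1)⁻¹ * X * ((c : ℂ) • σ + (r : ℂ) • 1)⁻¹).trace.re)
      = ENNReal.ofReal (c⁻¹ * c⁻¹) * G (r / c)
    rw [htr, ENNReal.ofReal_mul (by positivity)]
  -- Step 3 : pull out the constant and substitute
  have step3 : ∫⁻ r in Set.Ioi (0:ℝ), ENNReal.ofReal (c⁻¹ * c⁻¹) * G (r / c)
      = ENNReal.ofReal (c⁻¹ * c⁻¹) * (ENNReal.ofReal c * ∫⁻ s in Set.Ioi (0:ℝ), G s) := by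
    rw [lintegral_const_mul' _ _ ENNReal.ofReal_ne_top, aux_lintegral_Ioi_comp_div hc G]
  have hfac : ENNReal.ofReal (c⁻¹ * c⁻¹) * ENNReal.ofReal c = ENNReal.ofReal (1 / c) := by
    rw [← ENNReal.ofReal_mul (by positivity)]
    congr 1
    field_simp
  calc ENNReal.ofReal (1 / c) * bkm σ X
      = ENNReal.ofReal (c⁻¹ * c⁻¹) * (ENNReal.ofReal c * ∫⁻ s in Set.Ioi (0:ℝ), G s) := by
        rw [← mul_assoc, hfac]; rfl
    _ = ∫⁻ r in Set.Ioi (0:ℝ), F r := by rw [← step3, ← step2]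
    _ ≤ bkm ρ X := step1


end RDPI
end
end

section
/- Let 0 < p₂ < p₁ < 1 and let D_{p₁}, D_{p₂} be depolarizing channels on M_d(ℂ). Then for all density matrices ρ, σ on ℂ^d: ((1−p₁)/(1−p₂))² · (p₂/p₁) · D(D_{p₂}(ρ)‖D_{p₂}(σ)) ≤ D(D_{p₁}(ρ)‖D_{p₁}(σ)) ≤ ((1−p₁)/(1−p₂))² · ((1 − ((d−1)/d)p₂)/(1 − ((d−1)/d)p₁)) · D(D_{p₂}(ρ)‖D_{p₂}(σ)). -/
open scoped Matrix ENNReal ComplexOrder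

noncomputable section

namespace RDPI

/-- The depolarizing channel `D_p(ρ) = (1-p)ρ + (p/d) Tr(ρ) I`. -/
def depol (d : ℕ) (p : ℝ) (ρ : Matrix (Fin d) (Fin d) ℂ) : Matrix (Fin d) (Fin d) ℂ :=
  ((1 - p : ℝ) : ℂ) • ρ + ((p / d : ℝ) : ℂ) • ρ.trace • (1 : Matrix (Fin d) (Fin d) ℂ)


-- ==== auxiliary scalar lemmas ====


noncomputable def kval (a b : ℝ) : ℝ := a * Real.log a - a * Real.log b - a + b

lemma den_pos {a b : ℝ} (ha : 0 < a) (hb : 0 < b) {t : ℝ} (ht : t ∈ Set.uIcc (0:ℝ) 1) :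
    0 < b + t * (a - b) := by
  rw [Set.uIcc_of_le zero_le_one] at ht
  obtain ⟨ht0, ht1⟩ := ht
  have key : 0 < (1 - t) * b + t * a := by
    rcases lt_or_ge t 1 with h | h
    · have : 0 < (1 - t) * b := mul_pos (by linarith) hb
      nlinarith [mul_nonneg ht0 ha.le]
    · have ht1' : t = 1 := le_antisymm ht1 h
      subst ht1'; simpa using ha
  nlinarith

lemma kval_integrand_integrable {a b : ℝ} (ha : 0 < a) (hb : 0 < b) :
    IntervalIntegrable (fun t => (1 - t) * (a - b)^2 / (b + t * (a - b)))
      MeasureTheory.volume 0 1 := by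
  apply ContinuousOn.intervalIntegrable
  apply ContinuousOn.div
  · fun_prop
  · fun_prop
  · exact fun t ht => (den_pos ha hb ht).ne'

lemma kval_eq_integral {a b : ℝ} (ha : 0 < a) (hb : 0 < b) :
    kval a b = ∫ t in (0:ℝ)..1, (1 - t) * (a - b)^2 / (b + t * (a - b)) := by
  have h := intervalIntegral.integral_eq_sub_of_hasDerivAt
    (f := fun t => a * Real.log (b + t * (a - b)) - (a - b) * t)
    (f' := fun t => (1 - t) * (a - b)^2 / (b + t * (a - b)))
    (a := 0) (b := 1) ?_ (kval_integrand_integrable ha hb)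
  · rw [h]
    simp only [one_mul, mul_one, zero_mul, mul_zero, add_zero, sub_zero]
    have : b + (a - b) = a := by ring
    rw [this]
    unfold kval; ring
  · intro t ht
    have hden := den_pos ha hb ht
    have h1 : HasDerivAt (fun t : ℝ => b + t * (a - b)) (a - b) t := by
      simpa using ((hasDerivAt_id t).mul_const (a - b)).const_add b
    have h2 : HasDerivAt (fun t : ℝ => a * Real.log (b + t * (a - b)))
        (a * ((a - b) / (b + t * (a - b)))) t := ((h1.log hden.ne').const_mul a)
    have h3 : HasDerivAt (fun t : ℝ => (a - b) * t) (a - b) t := by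
      simpa using (hasDerivAt_id t).const_mul (a - b)
    have := h2.sub h3
    convert this using 1
    · funext s; rfl
    rw [mul_div_assoc', eq_sub_iff_add_eq, div_add' _ _ _ hden.ne']
    congr 1; ring

section
variable {e p₁ p₂ m : ℝ}

lemma core_lower (he : 0 < e) (h₂ : 0 < p₂) (h₁₂ : p₂ < p₁) (h₁ : p₁ < 1) (hm : 0 ≤ m) :
    ((1 - p₁)/(1 - p₂))^2 * (p₂/p₁) * ((1 - p₂)^2 / ((1 - p₂) * m + p₂ * e)) ≤
      (1 - p₁)^2 / ((1 - p₁) * m + p₁ * e) := by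
  have h₂1 : p₂ < 1 := h₁₂.trans h₁
  have h₁0 : 0 < p₁ := h₂.trans h₁₂
  have hden₂ : 0 < (1 - p₂) * m + p₂ * e := by
    have h1 : 0 < p₂ * e := mul_pos h₂ he
    nlinarith [mul_nonneg (by linarith : (0:ℝ) ≤ 1 - p₂) hm]
  have hden₁ : 0 < (1 - p₁) * m + p₁ * e := by
    have h1 : 0 < p₁ * e := mul_pos h₁0 he
    nlinarith [mul_nonneg (by linarith : (0:ℝ) ≤ 1 - p₁) hm]
  have h2ne : (1:ℝ) - p₂ ≠ 0 := by linarith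
  have hA : ((1 - p₁)/(1 - p₂))^2 * (p₂/p₁) * ((1 - p₂)^2 / ((1 - p₂) * m + p₂ * e)) =
      ((1 - p₁)^2 * p₂) / (p₁ * ((1 - p₂) * m + p₂ * e)) := by
    field_simp
  rw [hA, div_le_div_iff₀ (by positivity) hden₁]
  have key : p₂ * ((1 - p₁) * m + p₁ * e) ≤ p₁ * ((1 - p₂) * m + p₂ * e) := by nlinarith
  calc (1 - p₁)^2 * p₂ * ((1 - p₁) * m + p₁ * e)
      = (1 - p₁)^2 * (p₂ * ((1 - p₁) * m + p₁ * e)) := by ring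
    _ ≤ (1 - p₁)^2 * (p₁ * ((1 - p₂) * m + p₂ * e)) :=
        mul_le_mul_of_nonneg_left key (sq_nonneg _)
    _ = (1 - p₁)^2 * (p₁ * ((1 - p₂) * m + p₂ * e)) := rfl

lemma core_upper (he : 0 < e) (he1 : e ≤ 1) (h₂ : 0 < p₂) (h₁₂ : p₂ < p₁) (h₁ : p₁ < 1)
    (hm : 0 ≤ m) (hm1 : m ≤ 1) :
    (1 - p₁)^2 / ((1 - p₁) * m + p₁ * e) ≤
      ((1 - p₁)/(1 - p₂))^2 * ((1 - (1 - e) * p₂)/(1 - (1 - e) * p₁)) *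
        ((1 - p₂)^2 / ((1 - p₂) * m + p₂ * e)) := by
  have h₂1 : p₂ < 1 := h₁₂.trans h₁
  have h₁0 : 0 < p₁ := h₂.trans h₁₂
  have hden₂ : 0 < (1 - p₂) * m + p₂ * e := by
    have h1 : 0 < p₂ * e := mul_pos h₂ he
    nlinarith [mul_nonneg (by linarith : (0:ℝ) ≤ 1 - p₂) hm]
  have hden₁ : 0 < (1 - p₁) * m + p₁ * e := by
    have h1 : 0 < p₁ * e := mul_pos h₁0 he
    nlinarith [mul_nonneg (by linarith : (0:ℝ) ≤ 1 - p₁) hm]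
  have h2ne : (1:ℝ) - p₂ ≠ 0 := by linarith
  have hM₁ : 0 < 1 - (1 - e) * p₁ := by nlinarith
  have hM₂ : 0 < 1 - (1 - e) * p₂ := by nlinarith
  have hA : ((1 - p₁)/(1 - p₂))^2 * ((1 - (1 - e) * p₂)/(1 - (1 - e) * p₁)) *
      ((1 - p₂)^2 / ((1 - p₂) * m + p₂ * e)) =
      ((1 - p₁)^2 * (1 - (1 - e) * p₂)) / ((1 - (1 - e) * p₁) * ((1 - p₂) * m + p₂ * e)) := by
    field_simp
  rw [hA, div_le_div_iff₀ hden₁ (by positivity)]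
  have key : (1 - (1 - e) * p₁) * ((1 - p₂) * m + p₂ * e) ≤
      (1 - (1 - e) * p₂) * ((1 - p₁) * m + p₁ * e) := by nlinarith [mul_nonneg (mul_nonneg he.le (by linarith : (0:ℝ) ≤ 1 - m)) (by linarith : (0:ℝ) ≤ p₁ - p₂)]
  calc (1 - p₁)^2 * ((1 - (1 - e) * p₁) * ((1 - p₂) * m + p₂ * e))
      ≤ (1 - p₁)^2 * ((1 - (1 - e) * p₂) * ((1 - p₁) * m + p₁ * e)) :=
        mul_le_mul_of_nonneg_left key (sq_nonneg _)
    _ = (1 - p₁)^2 * (1 - (1 - e) * p₂) * ((1 - p₁) * m + p₁ * e) := by ring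
end


section
variable {e p₁ p₂ x y : ℝ}

lemma scalar_lower (he : 0 < e) (h₂ : 0 < p₂) (h₁₂ : p₂ < p₁) (h₁ : p₁ < 1)
    (hx : 0 ≤ x) (hx1 : x ≤ 1) (hy : 0 ≤ y) (hy1 : y ≤ 1) :
    ((1 - p₁)/(1 - p₂))^2 * (p₂/p₁) * kval ((1 - p₂)*x + p₂*e) ((1 - p₂)*y + p₂*e) ≤
      kval ((1 - p₁)*x + p₁*e) ((1 - p₁)*y + p₁*e) := by
  have h₂1 : p₂ < 1 := h₁₂.trans h₁
  have h₁0 : 0 < p₁ := h₂.trans h₁₂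
  have ha₂ : 0 < (1 - p₂)*x + p₂*e := by nlinarith [mul_pos h₂ he]
  have hb₂ : 0 < (1 - p₂)*y + p₂*e := by nlinarith [mul_pos h₂ he]
  have ha₁ : 0 < (1 - p₁)*x + p₁*e := by nlinarith [mul_pos h₁0 he]
  have hb₁ : 0 < (1 - p₁)*y + p₁*e := by nlinarith [mul_pos h₁0 he]
  rw [kval_eq_integral ha₂ hb₂, kval_eq_integral ha₁ hb₁,
    ← intervalIntegral.integral_const_mul]
  apply intervalIntegral.integral_mono_on zero_le_one
    ((kval_integrand_integrable ha₂ hb₂).const_mul _) (kval_integrand_integrable ha₁ hb₁)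
  intro t ht
  obtain ⟨ht0, ht1⟩ := ht
  have hm0 : 0 ≤ (1-t)*y + t*x := by
    have := mul_nonneg (by linarith : (0:ℝ) ≤ 1 - t) hy
    have := mul_nonneg ht0 hx
    linarith
  have hB₂ : ((1 - p₂)*y + p₂*e) + t*(((1 - p₂)*x + p₂*e) - ((1 - p₂)*y + p₂*e)) =
      (1 - p₂)*((1-t)*y + t*x) + p₂*e := by ring
  have hB₁ : ((1 - p₁)*y + p₁*e) + t*(((1 - p₁)*x + p₁*e) - ((1 - p₁)*y + p₁*e)) =
      (1 - p₁)*((1-t)*y + t*x) + p₁*e := by ring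
  simp only [hB₂, hB₁]
  calc ((1 - p₁)/(1 - p₂))^2 * (p₂/p₁) *
        ((1 - t) * (((1 - p₂)*x + p₂*e) - ((1 - p₂)*y + p₂*e))^2 /
          ((1 - p₂)*((1-t)*y + t*x) + p₂*e))
      = ((1-t)*(x-y)^2) * (((1 - p₁)/(1 - p₂))^2 * (p₂/p₁) *
          ((1 - p₂)^2 / ((1 - p₂)*((1-t)*y + t*x) + p₂*e))) := by ring
    _ ≤ ((1-t)*(x-y)^2) * ((1 - p₁)^2 / ((1 - p₁)*((1-t)*y + t*x) + p₁*e)) :=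
        mul_le_mul_of_nonneg_left (core_lower he h₂ h₁₂ h₁ hm0)
          (mul_nonneg (by linarith) (sq_nonneg _))
    _ = (1 - t) * (((1 - p₁)*x + p₁*e) - ((1 - p₁)*y + p₁*e))^2 /
          ((1 - p₁)*((1-t)*y + t*x) + p₁*e) := by ring

lemma scalar_upper (he : 0 < e) (he1 : e ≤ 1) (h₂ : 0 < p₂) (h₁₂ : p₂ < p₁) (h₁ : p₁ < 1)
    (hx : 0 ≤ x) (hx1 : x ≤ 1) (hy : 0 ≤ y) (hy1 : y ≤ 1) :
    kval ((1 - p₁)*x + p₁*e) ((1 - p₁)*y + p₁*e) ≤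
      ((1 - p₁)/(1 - p₂))^2 * ((1 - (1 - e) * p₂)/(1 - (1 - e) * p₁)) *
        kval ((1 - p₂)*x + p₂*e) ((1 - p₂)*y + p₂*e) := by
  have h₂1 : p₂ < 1 := h₁₂.trans h₁
  have h₁0 : 0 < p₁ := h₂.trans h₁₂
  have ha₂ : 0 < (1 - p₂)*x + p₂*e := by nlinarith [mul_pos h₂ he]
  have hb₂ : 0 < (1 - p₂)*y + p₂*e := by nlinarith [mul_pos h₂ he]
  have ha₁ : 0 < (1 - p₁)*x + p₁*e := by nlinarith [mul_pos h₁0 he]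
  have hb₁ : 0 < (1 - p₁)*y + p₁*e := by nlinarith [mul_pos h₁0 he]
  rw [kval_eq_integral ha₂ hb₂, kval_eq_integral ha₁ hb₁,
    ← intervalIntegral.integral_const_mul]
  apply intervalIntegral.integral_mono_on zero_le_one
    (kval_integrand_integrable ha₁ hb₁) ((kval_integrand_integrable ha₂ hb₂).const_mul _)
  intro t ht
  obtain ⟨ht0, ht1⟩ := ht
  have hm0 : 0 ≤ (1-t)*y + t*x := by
    have := mul_nonneg (by linarith : (0:ℝ) ≤ 1 - t) hy
    have := mul_nonneg ht0 hx
    linarith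
  have hm1 : (1-t)*y + t*x ≤ 1 := by nlinarith
  have hB₂ : ((1 - p₂)*y + p₂*e) + t*(((1 - p₂)*x + p₂*e) - ((1 - p₂)*y + p₂*e)) =
      (1 - p₂)*((1-t)*y + t*x) + p₂*e := by ring
  have hB₁ : ((1 - p₁)*y + p₁*e) + t*(((1 - p₁)*x + p₁*e) - ((1 - p₁)*y + p₁*e)) =
      (1 - p₁)*((1-t)*y + t*x) + p₁*e := by ring
  simp only [hB₂, hB₁]
  calc (1 - t) * (((1 - p₁)*x + p₁*e) - ((1 - p₁)*y + p₁*e))^2 /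
          ((1 - p₁)*((1-t)*y + t*x) + p₁*e)
      = ((1-t)*(x-y)^2) * ((1 - p₁)^2 / ((1 - p₁)*((1-t)*y + t*x) + p₁*e)) := by ring
    _ ≤ ((1-t)*(x-y)^2) * (((1 - p₁)/(1 - p₂))^2 * ((1 - (1 - e) * p₂)/(1 - (1 - e) * p₁)) *
          ((1 - p₂)^2 / ((1 - p₂)*((1-t)*y + t*x) + p₂*e))) :=
        mul_le_mul_of_nonneg_left (core_upper he he1 h₂ h₁₂ h₁ hm0 hm1)
          (mul_nonneg (by linarith) (sq_nonneg _))
    _ = ((1 - p₁)/(1 - p₂))^2 * ((1 - (1 - e) * p₂)/(1 - (1 - e) * p₁)) *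
        ((1 - t) * (((1 - p₂)*x + p₂*e) - ((1 - p₂)*y + p₂*e))^2 /
          ((1 - p₂)*((1-t)*y + t*x) + p₂*e)) := by ring
end

-- ==== auxiliary matrix lemmas ====
variable {d : ℕ}
variable {d : ℕ}

lemma star_mul_self (U : Matrix.unitaryGroup (Fin d) ℂ) : star (U : Matrix (Fin d) (Fin d) ℂ) * U = 1 := by
  have := U.2; rw [Matrix.mem_unitaryGroup_iff] at this
  exact mul_eq_one_comm.mp this

lemma mul_star_self (U : Matrix.unitaryGroup (Fin d) ℂ) : (U : Matrix (Fin d) (Fin d) ℂ) * star (U : Matrix (Fin d) (Fin d) ℂ) = 1 := by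
  have := U.2; rwa [Matrix.mem_unitaryGroup_iff] at this

lemma conj_pow (U : Matrix.unitaryGroup (Fin d) ℂ) (M : Matrix (Fin d) (Fin d) ℂ) (n : ℕ) :
    ((U : Matrix (Fin d) (Fin d) ℂ) * M * star (U : Matrix (Fin d) (Fin d) ℂ))^n =
      U * M^n * star (U : Matrix (Fin d) (Fin d) ℂ) := by
  induction n with
  | zero => simp [mul_star_self U]
  | succ n ih =>
      rw [pow_succ, ih, pow_succ]
      calc (U : Matrix (Fin d) (Fin d) ℂ) * M^n * star (U : Matrix (Fin d) (Fin d) ℂ) *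
            ((U : Matrix (Fin d) (Fin d) ℂ) * M * star (U : Matrix (Fin d) (Fin d) ℂ))
          = (U : Matrix (Fin d) (Fin d) ℂ) * M^n *
              (star (U : Matrix (Fin d) (Fin d) ℂ) * U) * M * star (U : Matrix (Fin d) (Fin d) ℂ) := by
            simp only [mul_assoc]
        _ = U * (M^n * M) * star (U : Matrix (Fin d) (Fin d) ℂ) := by
            rw [star_mul_self U]; simp only [mul_one, mul_assoc]

lemma aeval_conj (U : Matrix.unitaryGroup (Fin d) ℂ) (M : Matrix (Fin d) (Fin d) ℂ)
    (Q : Polynomial ℂ) :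
    Polynomial.aeval ((U : Matrix (Fin d) (Fin d) ℂ) * M * star (U : Matrix (Fin d) (Fin d) ℂ)) Q =
      U * Polynomial.aeval M Q * star (U : Matrix (Fin d) (Fin d) ℂ) := by
  induction Q using Polynomial.induction_on' with
  | add p q hp hq => rw [map_add, map_add, hp, hq]; noncomm_ring
  | monomial n c =>
      rw [Polynomial.aeval_monomial, Polynomial.aeval_monomial, conj_pow]
      rw [mul_assoc, ← mul_assoc ((algebraMap ℂ _) c), Algebra.commutes, mul_assoc, ← mul_assoc,
        ← mul_assoc, ← mul_assoc]

lemma aeval_diagonal (f : Fin d → ℂ) (Q : Polynomial ℂ) :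
    Polynomial.aeval (Matrix.diagonal f) Q =
      Matrix.diagonal (fun i => Polynomial.eval (f i) Q) := by
  induction Q using Polynomial.induction_on' with
  | add p q hp hq =>
      rw [map_add, hp, hq, Matrix.diagonal_add]
      congr 1; ext i; simp
  | monomial n c =>
      rw [Polynomial.aeval_monomial, Matrix.diagonal_pow]
      rw [Algebra.algebraMap_eq_smul_one, smul_mul_assoc, one_mul]
      ext i j
      rcases eq_or_ne i j with rfl | h
      · simp [Polynomial.eval_monomial]
      · simp [Matrix.diagonal_apply_ne _ h]

lemma isHermitian_conj_diag (U : Matrix.unitaryGroup (Fin d) ℂ) (mu : Fin d → ℝ) :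
    ((U : Matrix (Fin d) (Fin d) ℂ) * Matrix.diagonal (fun i => (mu i : ℂ)) *
      star (U : Matrix (Fin d) (Fin d) ℂ)).IsHermitian := by
  rw [Matrix.star_eq_conjTranspose]
  apply Matrix.isHermitian_mul_mul_conjTranspose
  rw [Matrix.IsHermitian, Matrix.diagonal_conjTranspose]
  congr 1
  funext i
  simp [Pi.star_def]

lemma matLog_conj (U : Matrix.unitaryGroup (Fin d) ℂ) (mu : Fin d → ℝ) :
    matLog ((U : Matrix (Fin d) (Fin d) ℂ) * Matrix.diagonal (fun i => (mu i : ℂ)) *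
        star (U : Matrix (Fin d) (Fin d) ℂ)) =
      (U : Matrix (Fin d) (Fin d) ℂ) * Matrix.diagonal (fun i => (Real.log (mu i) : ℂ)) *
        star (U : Matrix (Fin d) (Fin d) ℂ) := by
  set A := (U : Matrix (Fin d) (Fin d) ℂ) * Matrix.diagonal (fun i => (mu i : ℂ)) *
      star (U : Matrix (Fin d) (Fin d) ℂ) with hA_def
  have hA : A.IsHermitian := isHermitian_conj_diag U mu
  -- eigenvalues of A lie in the range of mu
  have hev : ∀ i, ∃ j, hA.eigenvalues i = mu j := by
    intro i
    have h1 : hA.eigenvalues i ∈ spectrum ℝ A := hA.eigenvalues_mem_spectrum_real i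
    have h2 : ((hA.eigenvalues i : ℝ) : ℂ) ∈ spectrum ℂ A := by
      rw [← spectrum.algebraMap_mem_iff ℂ] at h1
      exact h1
    have hU : A = (⟨(U : Matrix (Fin d) (Fin d) ℂ), U.2⟩ : unitary (Matrix (Fin d) (Fin d) ℂ)) *
        Matrix.diagonal (fun i => (mu i : ℂ)) *
        star ((⟨(U : Matrix (Fin d) (Fin d) ℂ), U.2⟩ : unitary (Matrix (Fin d) (Fin d) ℂ)) :
          Matrix (Fin d) (Fin d) ℂ) := rfl
    have hspec : spectrum ℂ A = Set.range (fun j => ((mu j : ℝ) : ℂ)) := by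
      rw [hU, Unitary.spectrum_star_right_conjugate, spectrum_diagonal]
    rw [hspec] at h2
    obtain ⟨j, hj⟩ := h2
    refine ⟨j, ?_⟩
    have hj' : ((mu j : ℝ) : ℂ) = ((hA.eigenvalues i : ℝ) : ℂ) := hj
    exact_mod_cast hj'.symm
  -- interpolation polynomial
  classical
  set s : Finset ℝ := Finset.image mu Finset.univ with hs_def
  set P : Polynomial ℝ := Lagrange.interpolate s id Real.log with hP_def
  have hPeval : ∀ z ∈ s, P.eval z = Real.log z := by
    intro z hz
    have := Lagrange.eval_interpolate_at_node (v := id) (s := s) (i := z) Real.log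
      (Set.injOn_id _) hz
    simpa [hP_def] using this
  set Q : Polynomial ℂ := P.map (algebraMap ℝ ℂ) with hQ_def
  have hQeval : ∀ z : ℝ, z ∈ s → Q.eval (z : ℂ) = ((Real.log z : ℝ) : ℂ) := by
    intro z hz
    rw [hQ_def]
    have : ((z : ℝ) : ℂ) = algebraMap ℝ ℂ z := rfl
    rw [this, Polynomial.eval_map, Polynomial.eval₂_at_apply, hPeval z hz]
    rfl
  have hmem : ∀ j, mu j ∈ s := fun j => Finset.mem_image_of_mem mu (Finset.mem_univ j)
  have hmem' : ∀ i, hA.eigenvalues i ∈ s := by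
    intro i
    obtain ⟨j, hj⟩ := hev i
    rw [hj]; exact hmem j
  -- compute aeval A Q two ways
  have h1 : Polynomial.aeval A Q =
      (U : Matrix (Fin d) (Fin d) ℂ) * Matrix.diagonal (fun i => (Real.log (mu i) : ℂ)) *
        star (U : Matrix (Fin d) (Fin d) ℂ) := by
    rw [hA_def, aeval_conj, aeval_diagonal]
    have e1 : (fun i => Polynomial.eval ((mu i : ℂ)) Q) =
        fun i => ((Real.log (mu i) : ℝ) : ℂ) := funext fun i => hQeval (mu i) (hmem i)
    rw [e1]
  have h2 : Polynomial.aeval A Q = matLog A := by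
    have hspec := hA.spectral_theorem
    rw [matLog, dif_pos hA]
    conv_lhs => rw [hspec, Unitary.conjStarAlgAut_apply]
    rw [show (star (hA.eigenvectorUnitary : Matrix (Fin d) (Fin d) ℂ)) =
      star ((hA.eigenvectorUnitary : Matrix (Fin d) (Fin d) ℂ)) from rfl]
    rw [aeval_conj hA.eigenvectorUnitary, aeval_diagonal]
    have e2 : (fun i => Polynomial.eval ((RCLike.ofReal ∘ hA.eigenvalues) i) Q) =
        fun i => ((Real.log (hA.eigenvalues i) : ℝ) : ℂ) := by
      funext i
      simpa using hQeval (hA.eigenvalues i) (hmem' i)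
    rw [e2]
  rw [← h2, h1]




variable {d : ℕ}

lemma trace_conj (U : Matrix.unitaryGroup (Fin d) ℂ) (D : Matrix (Fin d) (Fin d) ℂ) :
    ((U : Matrix (Fin d) (Fin d) ℂ) * D * star (U : Matrix (Fin d) (Fin d) ℂ)).trace = D.trace := by
  rw [Matrix.trace_mul_comm, ← mul_assoc, star_mul_self U, one_mul]

lemma conj_mul_conj (U : Matrix.unitaryGroup (Fin d) ℂ) (D E : Matrix (Fin d) (Fin d) ℂ) :
    ((U : Matrix (Fin d) (Fin d) ℂ) * D * star (U : Matrix (Fin d) (Fin d) ℂ)) *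
      ((U : Matrix (Fin d) (Fin d) ℂ) * E * star (U : Matrix (Fin d) (Fin d) ℂ)) =
      (U : Matrix (Fin d) (Fin d) ℂ) * (D * E) * star (U : Matrix (Fin d) (Fin d) ℂ) := by
  have h : ((U : Matrix (Fin d) (Fin d) ℂ) * D * star (U : Matrix (Fin d) (Fin d) ℂ)) *
      ((U : Matrix (Fin d) (Fin d) ℂ) * E * star (U : Matrix (Fin d) (Fin d) ℂ)) =
      (U : Matrix (Fin d) (Fin d) ℂ) * D *
        ((star (U : Matrix (Fin d) (Fin d) ℂ) * (U : Matrix (Fin d) (Fin d) ℂ)) *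
          (E * star (U : Matrix (Fin d) (Fin d) ℂ))) := by
    simp only [mul_assoc]
  rw [h, star_mul_self U, one_mul]
  simp only [mul_assoc]

lemma conj_mul_conj₂ (U V : Matrix.unitaryGroup (Fin d) ℂ) (D E : Matrix (Fin d) (Fin d) ℂ) :
    ((U : Matrix (Fin d) (Fin d) ℂ) * D * star (U : Matrix (Fin d) (Fin d) ℂ)) *
      ((V : Matrix (Fin d) (Fin d) ℂ) * E * star (V : Matrix (Fin d) (Fin d) ℂ)) =
      (U : Matrix (Fin d) (Fin d) ℂ) *
        (D * (star (U : Matrix (Fin d) (Fin d) ℂ) * (V : Matrix (Fin d) (Fin d) ℂ)) * E *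
          star (star (U : Matrix (Fin d) (Fin d) ℂ) * (V : Matrix (Fin d) (Fin d) ℂ))) *
        star (U : Matrix (Fin d) (Fin d) ℂ) := by
  rw [StarMul.star_mul, star_star]
  have h : (U : Matrix (Fin d) (Fin d) ℂ) *
      (D * (star (U : Matrix (Fin d) (Fin d) ℂ) * (V : Matrix (Fin d) (Fin d) ℂ)) * E *
        (star (V : Matrix (Fin d) (Fin d) ℂ) * (U : Matrix (Fin d) (Fin d) ℂ))) *
      star (U : Matrix (Fin d) (Fin d) ℂ) =
      ((U : Matrix (Fin d) (Fin d) ℂ) * D * star (U : Matrix (Fin d) (Fin d) ℂ)) *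
        ((V : Matrix (Fin d) (Fin d) ℂ) * E * star (V : Matrix (Fin d) (Fin d) ℂ)) *
        ((U : Matrix (Fin d) (Fin d) ℂ) * star (U : Matrix (Fin d) (Fin d) ℂ)) := by
    simp only [mul_assoc]
  rw [h, mul_star_self U, mul_one]

lemma trace_diag_pair (W : Matrix (Fin d) (Fin d) ℂ) (f g : Fin d → ℂ) :
    (Matrix.diagonal f * (W * Matrix.diagonal g * star W)).trace =
      ∑ i, ∑ j, f i * g j * (W i j * star (W i j)) := by
  have hentry : ∀ i, (Matrix.diagonal f * (W * Matrix.diagonal g * star W)) i i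
      = ∑ j, f i * g j * (W i j * star (W i j)) := by
    intro i
    rw [Matrix.diagonal_mul, Matrix.mul_apply, Finset.mul_sum]
    apply Finset.sum_congr rfl
    intro j _
    rw [Matrix.mul_diagonal, Matrix.star_eq_conjTranspose, Matrix.conjTranspose_apply]
    ring
  simp only [Matrix.trace, Matrix.diag]
  exact Finset.sum_congr rfl (fun i _ => hentry i)

lemma depol_conj (hd : 0 < d) (p : ℝ) (U : Matrix.unitaryGroup (Fin d) ℂ) (a : Fin d → ℝ)
    (hsa : ∑ i, a i = 1) :
    depol d p ((U : Matrix (Fin d) (Fin d) ℂ) * Matrix.diagonal (fun i => (a i : ℂ)) *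
        star (U : Matrix (Fin d) (Fin d) ℂ)) =
      (U : Matrix (Fin d) (Fin d) ℂ) *
        Matrix.diagonal (fun i => (((1 - p) * a i + p / d : ℝ) : ℂ)) *
        star (U : Matrix (Fin d) (Fin d) ℂ) := by
  have hd' : (0:ℝ) < d := by exact_mod_cast hd
  have htr : ((U : Matrix (Fin d) (Fin d) ℂ) * Matrix.diagonal (fun i => (a i : ℂ)) *
      star (U : Matrix (Fin d) (Fin d) ℂ)).trace = 1 := by
    rw [trace_conj, Matrix.trace_diagonal]
    have : ∑ i, ((a i : ℂ)) = ((∑ i, a i : ℝ) : ℂ) := by push_cast; rfl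
    rw [this, hsa, Complex.ofReal_one]
  rw [depol, htr, one_smul]
  have h1 : (1 : Matrix (Fin d) (Fin d) ℂ) =
      (U : Matrix (Fin d) (Fin d) ℂ) * Matrix.diagonal (fun _ => (1:ℂ)) *
        star (U : Matrix (Fin d) (Fin d) ℂ) := by
    rw [Matrix.diagonal_one, mul_one, mul_star_self U]
  rw [h1]
  have hsmul : ∀ (c : ℂ) (D : Matrix (Fin d) (Fin d) ℂ),
      c • ((U : Matrix (Fin d) (Fin d) ℂ) * D * star (U : Matrix (Fin d) (Fin d) ℂ)) =
        (U : Matrix (Fin d) (Fin d) ℂ) * (c • D) * star (U : Matrix (Fin d) (Fin d) ℂ) := by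
    intro c D
    rw [mul_smul_comm, smul_mul_assoc]
  rw [hsmul, hsmul, ← Matrix.add_mul, ← Matrix.mul_add]
  congr 2
  ext i j
  rcases eq_or_ne i j with rfl | hne
  · simp only [Matrix.add_apply, Matrix.smul_apply, Matrix.diagonal_apply_eq, smul_eq_mul]
    push_cast
    ring
  · simp [Matrix.diagonal_apply_ne _ hne, Matrix.one_apply_ne hne]

lemma supp_conj_eq_top (U : Matrix.unitaryGroup (Fin d) ℂ) (g : Fin d → ℂ)
    (hg : ∀ i, g i ≠ 0) :
    supp ((U : Matrix (Fin d) (Fin d) ℂ) * Matrix.diagonal g *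
      star (U : Matrix (Fin d) (Fin d) ℂ)) = ⊤ := by
  rw [supp, LinearMap.range_eq_top]
  intro v
  refine ⟨((U : Matrix (Fin d) (Fin d) ℂ) * Matrix.diagonal (fun i => (g i)⁻¹) *
    star (U : Matrix (Fin d) (Fin d) ℂ)).mulVec v, ?_⟩
  rw [Matrix.mulVecLin_apply, Matrix.mulVec_mulVec, conj_mul_conj,
    Matrix.diagonal_mul_diagonal]
  have : (fun i => g i * (g i)⁻¹) = fun _ => (1:ℂ) := by
    funext i; exact mul_inv_cancel₀ (hg i)
  rw [this, Matrix.diagonal_one, mul_one, mul_star_self U, Matrix.one_mulVec]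

lemma row_sum_one {W : Matrix (Fin d) (Fin d) ℂ} (hW : W ∈ Matrix.unitaryGroup (Fin d) ℂ)
    (i : Fin d) : ∑ j, Complex.normSq (W i j) = 1 := by
  rw [Matrix.mem_unitaryGroup_iff] at hW
  have h := congrFun (congrFun hW i) i
  rw [Matrix.mul_apply] at h
  have h1 : ∑ j, W i j * star W j i = 1 := by
    rw [h, Matrix.one_apply_eq]
  have h2 : ∑ j, W i j * star W j i = ((∑ j, Complex.normSq (W i j) : ℝ) : ℂ) := by
    push_cast
    apply Finset.sum_congr rfl
    intro j _
    rw [Matrix.star_eq_conjTranspose, Matrix.conjTranspose_apply]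
    exact (Complex.mul_conj _)
  rw [h2] at h1
  exact_mod_cast h1

lemma col_sum_one {W : Matrix (Fin d) (Fin d) ℂ} (hW : W ∈ Matrix.unitaryGroup (Fin d) ℂ)
    (j : Fin d) : ∑ i, Complex.normSq (W i j) = 1 := by
  rw [Matrix.mem_unitaryGroup_iff'] at hW
  have h := congrFun (congrFun hW j) j
  rw [Matrix.mul_apply] at h
  have h2 : ∑ i, star W j i * W i j = ((∑ i, Complex.normSq (W i j) : ℝ) : ℂ) := by
    push_cast
    apply Finset.sum_congr rfl
    intro i _
    rw [Matrix.star_eq_conjTranspose, Matrix.conjTranspose_apply, mul_comm]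
    exact (Complex.mul_conj _)
  rw [h2] at h
  have h3 : ((∑ i, Complex.normSq (W i j) : ℝ) : ℂ) = 1 := by
    rw [h, Matrix.one_apply_eq]
  exact_mod_cast h3

lemma relEnt_depol_eq (hd : 0 < d) {p : ℝ} (hp : 0 < p) (hp1 : p < 1)
    (U V : Matrix.unitaryGroup (Fin d) ℂ) (a b : Fin d → ℝ)
    (ha0 : ∀ i, 0 ≤ a i) (hb0 : ∀ i, 0 ≤ b i)
    (hsa : ∑ i, a i = 1) (hsb : ∑ i, b i = 1) :
    relEnt
      (depol d p ((U : Matrix (Fin d) (Fin d) ℂ) * Matrix.diagonal (fun i => (a i : ℂ)) *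
        star (U : Matrix (Fin d) (Fin d) ℂ)))
      (depol d p ((V : Matrix (Fin d) (Fin d) ℂ) * Matrix.diagonal (fun i => (b i : ℂ)) *
        star (V : Matrix (Fin d) (Fin d) ℂ))) =
      ENNReal.ofReal (∑ i, ∑ j,
        Complex.normSq ((star (U : Matrix (Fin d) (Fin d) ℂ) * (V : Matrix (Fin d) (Fin d) ℂ)) i j) *
          kval ((1 - p) * a i + p / d) ((1 - p) * b j + p / d)) := by
  have hd' : (0:ℝ) < d := by exact_mod_cast hd
  set W : Matrix (Fin d) (Fin d) ℂ :=
    star (U : Matrix (Fin d) (Fin d) ℂ) * (V : Matrix (Fin d) (Fin d) ℂ) with hW_def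
  have hWmem : W ∈ Matrix.unitaryGroup (Fin d) ℂ := by
    rw [Matrix.mem_unitaryGroup_iff, hW_def, StarMul.star_mul, star_star]
    have h : star (U : Matrix (Fin d) (Fin d) ℂ) * (V : Matrix (Fin d) (Fin d) ℂ) *
        (star (V : Matrix (Fin d) (Fin d) ℂ) * (U : Matrix (Fin d) (Fin d) ℂ)) =
        star (U : Matrix (Fin d) (Fin d) ℂ) *
          (((V : Matrix (Fin d) (Fin d) ℂ) * star (V : Matrix (Fin d) (Fin d) ℂ)) *
            (U : Matrix (Fin d) (Fin d) ℂ)) := by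
      simp only [mul_assoc]
    rw [h, mul_star_self V, one_mul, star_mul_self U]
  have hbpos : ∀ j, (0:ℝ) < (1 - p) * b j + p / d := by
    intro j
    have h1 : 0 < p / (d:ℝ) := by positivity
    have h2 : 0 ≤ (1 - p) * b j := mul_nonneg (by linarith) (hb0 j)
    linarith
  have hapos : ∀ i, (0:ℝ) < (1 - p) * a i + p / d := by
    intro i
    have h1 : 0 < p / (d:ℝ) := by positivity
    have h2 : 0 ≤ (1 - p) * a i := mul_nonneg (by linarith) (ha0 i)
    linarith
  have hA := depol_conj hd p U a hsa
  have hB := depol_conj hd p V b hsb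
  rw [hA, hB]
  have hsupp : supp ((V : Matrix (Fin d) (Fin d) ℂ) *
      Matrix.diagonal (fun i => (((1 - p) * b i + p / d : ℝ) : ℂ)) *
      star (V : Matrix (Fin d) (Fin d) ℂ)) = ⊤ :=
    supp_conj_eq_top V _ (fun i => Complex.ofReal_ne_zero.mpr (hbpos i).ne')
  rw [relEnt, if_pos (le_of_le_of_eq le_top hsupp.symm)]
  rw [matLog_conj U (fun i => (1 - p) * a i + p / (d:ℝ)),
    matLog_conj V (fun i => (1 - p) * b i + p / (d:ℝ))]
  rw [Matrix.mul_sub, Matrix.trace_sub, conj_mul_conj U, conj_mul_conj₂ U V]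
  rw [trace_conj, trace_conj, Matrix.diagonal_mul_diagonal, Matrix.trace_diagonal]
  have hassoc : Matrix.diagonal (fun i => (((1 - p) * a i + p / d : ℝ) : ℂ)) * W *
      Matrix.diagonal (fun i => ((Real.log ((1 - p) * b i + p / d) : ℝ) : ℂ)) * star W =
      Matrix.diagonal (fun i => (((1 - p) * a i + p / d : ℝ) : ℂ)) *
        (W * Matrix.diagonal (fun i => ((Real.log ((1 - p) * b i + p / d) : ℝ) : ℂ)) * star W) := by
    simp only [mul_assoc]
  rw [hassoc, trace_diag_pair]
  have hre1 : (∑ i, ((((1 - p) * a i + p / d : ℝ)) : ℂ) *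
      ((Real.log ((1 - p) * a i + p / d) : ℝ) : ℂ)) =
      ((∑ i, ((1 - p) * a i + p / d) * Real.log ((1 - p) * a i + p / d) : ℝ) : ℂ) := by
    push_cast
    rfl
  have hconj : ∀ i j, W i j * star (W i j) = ((Complex.normSq (W i j) : ℝ) : ℂ) := by
    intro i j
    rw [show star (W i j) = (starRingEnd ℂ) (W i j) from rfl, Complex.mul_conj]
  have hre2 : (∑ i, ∑ j, ((((1 - p) * a i + p / d : ℝ)) : ℂ) *
      ((Real.log ((1 - p) * b j + p / d) : ℝ) : ℂ) * (W i j * star (W i j))) =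
      ((∑ i, ∑ j, ((1 - p) * a i + p / d) * Real.log ((1 - p) * b j + p / d) *
        Complex.normSq (W i j) : ℝ) : ℂ) := by
    have h1 : ∀ i j, ((((1 - p) * a i + p / d : ℝ)) : ℂ) *
        ((Real.log ((1 - p) * b j + p / d) : ℝ) : ℂ) * (W i j * star (W i j)) =
        ((((1 - p) * a i + p / d) * Real.log ((1 - p) * b j + p / d) *
          Complex.normSq (W i j) : ℝ) : ℂ) := by
      intro i j
      rw [hconj i j]
      push_cast
      ring
    simp only [h1]
    push_cast
    rfl
  rw [hre1, hre2, ← Complex.ofReal_sub, Complex.ofReal_re]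
  congr 1
  have hrow : ∀ i, ∑ j, Complex.normSq (W i j) = 1 := fun i => row_sum_one hWmem i
  have hcol : ∀ j, ∑ i, Complex.normSq (W i j) = 1 := fun j => col_sum_one hWmem j
  have hsabar : ∑ i, ((1 - p) * a i + p / d) = 1 := by
    rw [Finset.sum_add_distrib, ← Finset.mul_sum, hsa, Finset.sum_const, Finset.card_univ,
      Fintype.card_fin, nsmul_eq_mul]
    field_simp
    ring
  have hsbbar : ∑ j, ((1 - p) * b j + p / d) = 1 := by
    rw [Finset.sum_add_distrib, ← Finset.mul_sum, hsb, Finset.sum_const, Finset.card_univ,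
      Fintype.card_fin, nsmul_eq_mul]
    field_simp
    ring
  have hT1 : ∑ i, ∑ j, ((1 - p) * a i + p / d) * Real.log ((1 - p) * a i + p / d) *
      Complex.normSq (W i j) = ∑ i, ((1 - p) * a i + p / d) * Real.log ((1 - p) * a i + p / d) := by
    apply Finset.sum_congr rfl
    intro i _
    rw [← Finset.mul_sum, hrow i, mul_one]
  have hT3 : ∑ i, ∑ j, ((1 - p) * a i + p / d) * Complex.normSq (W i j) = 1 := by
    have h : ∀ i, ∑ j, ((1 - p) * a i + p / d) * Complex.normSq (W i j) =
        ((1 - p) * a i + p / d) := by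
      intro i; rw [← Finset.mul_sum, hrow i, mul_one]
    rw [Finset.sum_congr rfl (fun i _ => h i), hsabar]
  have hT4 : ∑ i, ∑ j, ((1 - p) * b j + p / d) * Complex.normSq (W i j) = 1 := by
    rw [Finset.sum_comm]
    have h : ∀ j, ∑ i, ((1 - p) * b j + p / d) * Complex.normSq (W i j) =
        ((1 - p) * b j + p / d) := by
      intro j; rw [← Finset.mul_sum, hcol j, mul_one]
    rw [Finset.sum_congr rfl (fun j _ => h j), hsbbar]
  have hterm : ∀ i j, Complex.normSq (W i j) * kval ((1 - p) * a i + p / d) ((1 - p) * b j + p / d) =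
      ((1 - p) * a i + p / d) * Real.log ((1 - p) * a i + p / d) * Complex.normSq (W i j) -
        ((1 - p) * a i + p / d) * Real.log ((1 - p) * b j + p / d) * Complex.normSq (W i j) -
        ((1 - p) * a i + p / d) * Complex.normSq (W i j) +
        ((1 - p) * b j + p / d) * Complex.normSq (W i j) := by
    intro i j
    simp only [kval]
    ring
  calc (∑ i, ((1 - p) * a i + p / d) * Real.log ((1 - p) * a i + p / d)) -
      ∑ i, ∑ j, ((1 - p) * a i + p / d) * Real.log ((1 - p) * b j + p / d) * Complex.normSq (W i j)
      = ∑ i, ∑ j, (((1 - p) * a i + p / d) * Real.log ((1 - p) * a i + p / d) * Complex.normSq (W i j) -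
          ((1 - p) * a i + p / d) * Real.log ((1 - p) * b j + p / d) * Complex.normSq (W i j) -
          ((1 - p) * a i + p / d) * Complex.normSq (W i j) +
          ((1 - p) * b j + p / d) * Complex.normSq (W i j)) := by
        simp only [Finset.sum_add_distrib, Finset.sum_sub_distrib]
        rw [hT1, hT3, hT4]
        ring
    _ = ∑ i, ∑ j, Complex.normSq (W i j) *
          kval ((1 - p) * a i + p / d) ((1 - p) * b j + p / d) := by
        apply Finset.sum_congr rfl
        intro i _
        apply Finset.sum_congr rfl
        intro j _
        rw [hterm i j]


section FinalProof

/-- Eigenvalue of a density matrix is at most one. -/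
lemma eig_le_one {a : Fin d → ℝ} (ha0 : ∀ i, 0 ≤ a i) (hsa : ∑ i, a i = 1) (i : Fin d) :
    a i ≤ 1 := by
  have h := Finset.single_le_sum (f := a) (fun j _ => ha0 j) (Finset.mem_univ i)
  rw [hsa] at h
  exact h

lemma density_spectral {ρ : Matrix (Fin d) (Fin d) ℂ} (hρ : IsDensity ρ) :
    ∃ (U : Matrix.unitaryGroup (Fin d) ℂ) (a : Fin d → ℝ),
      (∀ i, 0 ≤ a i) ∧ (∑ i, a i = 1) ∧
      ρ = (U : Matrix (Fin d) (Fin d) ℂ) * Matrix.diagonal (fun i => (a i : ℂ)) *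
        star (U : Matrix (Fin d) (Fin d) ℂ) := by
  obtain ⟨hPSD, htr⟩ := hρ
  have hH : ρ.IsHermitian := hPSD.1
  refine ⟨hH.eigenvectorUnitary, hH.eigenvalues, fun i => hPSD.eigenvalues_nonneg i, ?_, ?_⟩
  · have heq : ρ = (hH.eigenvectorUnitary : Matrix (Fin d) (Fin d) ℂ) *
        Matrix.diagonal (fun i => ((hH.eigenvalues i : ℝ) : ℂ)) *
        star (hH.eigenvectorUnitary : Matrix (Fin d) (Fin d) ℂ) := by
      have hs := hH.spectral_theorem
      rw [Unitary.conjStarAlgAut_apply] at hs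
      exact hs
    have htr' : ρ.trace = ((∑ i, hH.eigenvalues i : ℝ) : ℂ) := by
      have h1 := congrArg Matrix.trace heq
      rw [h1, trace_conj, Matrix.trace_diagonal]
      push_cast
      rfl
    rw [htr'] at htr
    exact_mod_cast htr
  · have hs := hH.spectral_theorem
    rw [Unitary.conjStarAlgAut_apply] at hs
    exact hs

theorem depolarizing_relative_bounds' {d : ℕ} (hd : 0 < d)
    {p₁ p₂ : ℝ} (h₂ : 0 < p₂) (h₁₂ : p₂ < p₁) (h₁ : p₁ < 1)
    (ρ σ : Matrix (Fin d) (Fin d) ℂ) (hρ : IsDensity ρ) (hσ : IsDensity σ) :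
    ENNReal.ofReal (((1 - p₁)/(1 - p₂))^2 * (p₂/p₁)) *
        relEnt (depol d p₂ ρ) (depol d p₂ σ) ≤ relEnt (depol d p₁ ρ) (depol d p₁ σ) ∧
    relEnt (depol d p₁ ρ) (depol d p₁ σ) ≤
      ENNReal.ofReal (((1 - p₁)/(1 - p₂))^2 *
          ((1 - ((d - 1 : ℝ)/d) * p₂)/(1 - ((d - 1 : ℝ)/d) * p₁))) *
        relEnt (depol d p₂ ρ) (depol d p₂ σ) := by
  have hd' : (0:ℝ) < d := by exact_mod_cast hd
  have h₂1 : p₂ < 1 := h₁₂.trans h₁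
  have h₁0 : 0 < p₁ := h₂.trans h₁₂
  obtain ⟨U, a, ha0, hsa, hρeq⟩ := density_spectral hρ
  obtain ⟨V, b, hb0, hsb, hσeq⟩ := density_spectral hσ
  have ha1 : ∀ i, a i ≤ 1 := eig_le_one ha0 hsa
  have hb1 : ∀ j, b j ≤ 1 := eig_le_one hb0 hsb
  rw [hρeq, hσeq]
  rw [relEnt_depol_eq hd h₂ h₂1 U V a b ha0 hb0 hsa hsb,
    relEnt_depol_eq hd h₁0 h₁ U V a b ha0 hb0 hsa hsb]
  have he : (0:ℝ) < 1/(d:ℝ) := by positivity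
  have he1 : (1:ℝ)/(d:ℝ) ≤ 1 := by
    rw [div_le_one hd']
    exact_mod_cast hd
  have hdd : ((d:ℝ) - 1)/(d:ℝ) = 1 - 1/(d:ℝ) := by field_simp
  -- abbreviations
  set L : ℝ := ((1 - p₁)/(1 - p₂))^2 * (p₂/p₁) with hL_def
  set Uc : ℝ := ((1 - p₁)/(1 - p₂))^2 *
      ((1 - ((d - 1 : ℝ)/d) * p₂)/(1 - ((d - 1 : ℝ)/d) * p₁)) with hUc_def
  have hM₁ : 0 < 1 - ((d - 1 : ℝ)/d) * p₁ := by rw [hdd]; nlinarith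
  have hM₂ : 0 < 1 - ((d - 1 : ℝ)/d) * p₂ := by rw [hdd]; nlinarith
  have hL0 : 0 ≤ L := by
    rw [hL_def]
    exact mul_nonneg (sq_nonneg _) (div_nonneg h₂.le h₁0.le)
  have hUc0 : 0 ≤ Uc := by
    rw [hUc_def]
    exact mul_nonneg (sq_nonneg _) (div_nonneg hM₂.le hM₁.le)
  set W : Matrix (Fin d) (Fin d) ℂ :=
    star (U : Matrix (Fin d) (Fin d) ℂ) * (V : Matrix (Fin d) (Fin d) ℂ) with hW_def
  set S₁ : ℝ := ∑ i, ∑ j, Complex.normSq (W i j) *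
      kval ((1 - p₁) * a i + p₁ / d) ((1 - p₁) * b j + p₁ / d) with hS₁_def
  set S₂ : ℝ := ∑ i, ∑ j, Complex.normSq (W i j) *
      kval ((1 - p₂) * a i + p₂ / d) ((1 - p₂) * b j + p₂ / d) with hS₂_def
  have hlow : L * S₂ ≤ S₁ := by
    rw [hS₁_def, hS₂_def, Finset.mul_sum]
    apply Finset.sum_le_sum
    intro i _
    rw [Finset.mul_sum]
    apply Finset.sum_le_sum
    intro j _
    have hs := scalar_lower (e := 1/(d:ℝ)) he h₂ h₁₂ h₁ (ha0 i) (ha1 i) (hb0 j) (hb1 j)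
    simp only [mul_one_div] at hs
    calc L * (Complex.normSq (W i j) *
          kval ((1 - p₂) * a i + p₂ / d) ((1 - p₂) * b j + p₂ / d))
        = Complex.normSq (W i j) * (L *
            kval ((1 - p₂) * a i + p₂ / d) ((1 - p₂) * b j + p₂ / d)) := by ring
      _ ≤ Complex.normSq (W i j) *
            kval ((1 - p₁) * a i + p₁ / d) ((1 - p₁) * b j + p₁ / d) :=
          mul_le_mul_of_nonneg_left hs (Complex.normSq_nonneg _)
  have hupp : S₁ ≤ Uc * S₂ := by
    rw [hS₁_def, hS₂_def, Finset.mul_sum]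
    apply Finset.sum_le_sum
    intro i _
    rw [Finset.mul_sum]
    apply Finset.sum_le_sum
    intro j _
    have hs := scalar_upper (e := 1/(d:ℝ)) he he1 h₂ h₁₂ h₁ (ha0 i) (ha1 i) (hb0 j) (hb1 j)
    simp only [mul_one_div, ← hdd] at hs
    calc Complex.normSq (W i j) *
          kval ((1 - p₁) * a i + p₁ / d) ((1 - p₁) * b j + p₁ / d)
        ≤ Complex.normSq (W i j) * (Uc *
            kval ((1 - p₂) * a i + p₂ / d) ((1 - p₂) * b j + p₂ / d)) :=
          mul_le_mul_of_nonneg_left hs (Complex.normSq_nonneg _)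
      _ = Uc * (Complex.normSq (W i j) *
            kval ((1 - p₂) * a i + p₂ / d) ((1 - p₂) * b j + p₂ / d)) := by ring
  constructor
  · rw [← ENNReal.ofReal_mul hL0]
    exact ENNReal.ofReal_le_ofReal hlow
  · rw [← ENNReal.ofReal_mul hUc0]
    exact ENNReal.ofReal_le_ofReal hupp

end FinalProof

/-- relative expansion/contraction bounds for a pair of depolarizing
channels. -/
theorem depolarizing_relative_bounds {d : ℕ} (hd : 0 < d)
    {p₁ p₂ : ℝ} (h₂ : 0 < p₂) (h₁₂ : p₂ < p₁) (h₁ : p₁ < 1)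
    (ρ σ : Matrix (Fin d) (Fin d) ℂ) (hρ : IsDensity ρ) (hσ : IsDensity σ) :
    ENNReal.ofReal (((1 - p₁)/(1 - p₂))^2 * (p₂/p₁)) *
        relEnt (depol d p₂ ρ) (depol d p₂ σ) ≤ relEnt (depol d p₁ ρ) (depol d p₁ σ) ∧
    relEnt (depol d p₁ ρ) (depol d p₁ σ) ≤
      ENNReal.ofReal (((1 - p₁)/(1 - p₂))^2 *
          ((1 - ((d - 1 : ℝ)/d) * p₂)/(1 - ((d - 1 : ℝ)/d) * p₁))) *
        relEnt (depol d p₂ ρ) (depol d p₂ σ) := by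
  exact depolarizing_relative_bounds' hd h₂ h₁₂ h₁ ρ σ hρ hσ

end RDPI
end
end

section
/- Let M : M_{d_A}(ℂ) → M_{d_B}(ℂ) be a quantum channel and suppose there exist constants 0 < λ_min ≤ λ_max < ∞ such that λ_min·I ≤ M(ρ) ≤ λ_max·I for every density matrix ρ on ℂ^{d_A}. Then for all density matrices ρ, σ on ℂ^{d_A}: (1/(2λ_max)) · ‖M(ρ−σ)‖₂² ≤ D(M(ρ)‖M(σ)) ≤ (1/(2λ_min)) · ‖M(ρ−σ)‖₂². -/
open scoped Matrix ENNReal ComplexOrder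

noncomputable section

namespace RDPI

open intervalIntegral in
lemma key_integral {x y c : ℝ} (hc : c ≠ 0) :
    (∫ t in y..x, (x - t) / c) = (x - y)^2 / (2*c) := by
  have h : (fun t : ℝ => (x - t)/c) = fun t => (x/c) - t * (1/c) := by
    funext t; ring
  rw [h, intervalIntegral.integral_sub (by exact _root_.intervalIntegrable_const)
      (IntervalIntegrable.mul_const intervalIntegrable_id _),
    intervalIntegral.integral_const, intervalIntegral.integral_mul_const,
    integral_id]
  field_simp
  linear_combination (2*x^2 - 2*x*y) * mul_inv_cancel₀ hc

open intervalIntegral in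
lemma key_repr {m M x y : ℝ} (hm : 0 < m) (hx : x ∈ Set.Icc m M) (hy : y ∈ Set.Icc m M) :
    (∫ t in y..x, (x - t) / t) = x * (Real.log x - Real.log y) - (x - y) := by
  have hx0 : (0:ℝ) < x := lt_of_lt_of_le hm hx.1
  have hy0 : (0:ℝ) < y := lt_of_lt_of_le hm hy.1
  have h0 : (0:ℝ) ∉ Set.uIcc y x := by
    rw [Set.mem_uIcc]; push_neg
    constructor <;> intro h <;> nlinarith
  have hcong : (∫ t in y..x, (x - t) / t) = ∫ t in y..x, (x * (1/t) - 1) := by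
    apply intervalIntegral.integral_congr
    intro t ht
    have ht0 : t ≠ 0 := fun h => h0 (h ▸ ht)
    field_simp
  rw [hcong, intervalIntegral.integral_sub, intervalIntegral.integral_const_mul,
    integral_one_div h0,
    intervalIntegral.integral_const]
  · rw [Real.log_div hx0.ne' hy0.ne', smul_eq_mul]; ring
  · apply ContinuousOn.intervalIntegrable
    apply ContinuousOn.mul continuousOn_const
    apply ContinuousOn.div continuousOn_const continuousOn_id
    intro t ht h; exact h0 (h ▸ ht)
  · exact _root_.intervalIntegrable_const

lemma scalar_bounds {m M x y : ℝ} (hm : 0 < m) (hx : x ∈ Set.Icc m M) (hy : y ∈ Set.Icc m M) :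
    (x - y)^2 / (2*M) ≤ x * (Real.log x - Real.log y) - (x - y) ∧
    x * (Real.log x - Real.log y) - (x - y) ≤ (x - y)^2 / (2*m) := by
  have hmM : m ≤ M := le_trans hx.1 hx.2
  have hM : 0 < M := lt_of_lt_of_le hm hmM
  rw [← key_repr hm hx hy, ← key_integral hM.ne', ← key_integral hm.ne']
  have hint : ∀ c : ℝ, c ≠ 0 → IntervalIntegrable (fun t => (x - t)/c) MeasureTheory.volume y x :=
    fun c hc => (Continuous.div_const (by continuity) c).intervalIntegrable y x
  have hintt : IntervalIntegrable (fun t => (x - t)/t) MeasureTheory.volume y x := by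
    apply ContinuousOn.intervalIntegrable
    apply ContinuousOn.div (by fun_prop) continuousOn_id
    intro t ht h
    rw [Set.mem_uIcc] at ht
    subst h
    rcases ht with ht | ht <;> nlinarith [hx.1, hy.1]
  rcases le_total y x with hyx | hyx
  · constructor
    · apply intervalIntegral.integral_mono_on hyx (hint M hM.ne') hintt
      intro t ht
      have h1 : m ≤ t := le_trans hy.1 ht.1
      have h2 : t ≤ M := le_trans ht.2 hx.2
      exact div_le_div_of_nonneg_left (by linarith [ht.2]) (by linarith) h2
    · apply intervalIntegral.integral_mono_on hyx hintt (hint m hm.ne')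
      intro t ht
      have h1 : m ≤ t := le_trans hy.1 ht.1
      exact div_le_div_of_nonneg_left (by linarith [ht.2]) hm h1
  · constructor
    · rw [intervalIntegral.integral_symm x y, intervalIntegral.integral_symm x y, neg_le_neg_iff]
      apply intervalIntegral.integral_mono_on hyx hintt.symm ((hint M hM.ne').symm)
      intro t ht
      have h1 : m ≤ t := le_trans hx.1 ht.1
      have h2 : t ≤ M := le_trans ht.2 hy.2
      rw [div_le_div_iff₀ (by linarith) hM]
      nlinarith [ht.1]
    · rw [intervalIntegral.integral_symm x y, intervalIntegral.integral_symm x y, neg_le_neg_iff]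
      apply intervalIntegral.integral_mono_on hyx ((hint m hm.ne').symm) hintt.symm
      intro t ht
      have h1 : m ≤ t := le_trans hx.1 ht.1
      rw [div_le_div_iff₀ hm (by linarith)]
      nlinarith [ht.1]

/-! Auxiliary trace lemmas -/

variable {d : ℕ}

lemma trace_diag_conj (f g : Fin d → ℂ) (W : Matrix (Fin d) (Fin d) ℂ) :
    (Matrix.diagonal f * W * Matrix.diagonal g * Wᴴ).trace
      = ∑ i, ∑ j, f i * g j * (W i j * star (W i j)) := by
  simp only [Matrix.trace, Matrix.diag_apply, Matrix.mul_apply, Matrix.diagonal_apply,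
    Matrix.conjTranspose_apply, ite_mul, zero_mul, mul_ite, mul_zero,
    Finset.sum_ite_eq, Finset.sum_ite_eq', Finset.mem_univ, if_true]
  apply Finset.sum_congr rfl; intro i _
  apply Finset.sum_congr rfl; intro j _
  ring

lemma trace_conj_pair (U D V E : Matrix (Fin d) (Fin d) ℂ) :
    (U * D * star U * (V * E * star V)).trace
      = (D * ((star U * V) * E * star (star U * V))).trace := by
  have h1 : U * D * star U * (V * E * star V)
      = U * (D * (star U * V * E * star V)) := by noncomm_ring
  rw [h1, Matrix.trace_mul_comm]
  congr 1
  rw [star_mul, star_star]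
  noncomm_ring

lemma trace_pair (U V : Matrix (Fin d) (Fin d) ℂ) (f g : Fin d → ℂ) :
    (U * Matrix.diagonal f * star U * (V * Matrix.diagonal g * star V)).trace
      = ∑ i, ∑ j, f i * g j * ((star U * V) i j * star ((star U * V) i j)) := by
  rw [trace_conj_pair]
  have h : Matrix.diagonal f * ((star U * V) * Matrix.diagonal g * star (star U * V))
      = Matrix.diagonal f * (star U * V) * Matrix.diagonal g * (star U * V)ᴴ := by
    rw [Matrix.star_eq_conjTranspose]; noncomm_ring
  rw [h, trace_diag_conj]

lemma eig_mem {A : Matrix (Fin d) (Fin d) ℂ} {m M : ℝ} (hA : A.IsHermitian)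
    (h1 : (A - (m:ℂ) • 1).PosSemidef) (h2 : ((M:ℂ) • 1 - A).PosSemidef) (i : Fin d) :
    hA.eigenvalues i ∈ Set.Icc m M := by
  set v : Fin d → ℂ := ⇑(hA.eigenvectorBasis i) with hv_def
  have hv : dotProduct (star v) v = 1 := by
    have h := hA.eigenvectorBasis.orthonormal.1 i
    have : (inner ℂ (hA.eigenvectorBasis i) (hA.eigenvectorBasis i) : ℂ) = 1 := by
      rw [inner_self_eq_norm_sq_to_K, h]; norm_num
    rw [EuclideanSpace.inner_eq_star_dotProduct, dotProduct_comm] at this; exact this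
  have hAv : dotProduct (star v) (A *ᵥ v) = (hA.eigenvalues i : ℂ) := by
    rw [hv_def, hA.mulVec_eigenvectorBasis]
    rw [dotProduct_smul]
    rw [← hv_def, hv]
    simp [Complex.real_smul]
  constructor
  · have := h1.dotProduct_mulVec_nonneg v
    rw [Matrix.sub_mulVec, dotProduct_sub, hAv, Matrix.smul_mulVec,
      Matrix.one_mulVec, dotProduct_smul, hv, smul_eq_mul, mul_one] at this
    have h' : (0:ℂ) ≤ ((hA.eigenvalues i - m : ℝ) : ℂ) := by push_cast; exact this
    rw [Complex.zero_le_real] at h'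
    linarith
  · have := h2.dotProduct_mulVec_nonneg v
    rw [Matrix.sub_mulVec, dotProduct_sub, hAv, Matrix.smul_mulVec,
      Matrix.one_mulVec, dotProduct_smul, hv, smul_eq_mul, mul_one] at this
    have h' : (0:ℂ) ≤ ((M - hA.eigenvalues i : ℝ) : ℂ) := by push_cast; exact this
    rw [Complex.zero_le_real] at h'
    linarith


/-- two-sided Hilbert–Schmidt bounds on the relative entropy for a
strictly positive channel. -/
theorem strictly_positive_channel_bounds {dA dB : ℕ}
    (M : Matrix (Fin dA) (Fin dA) ℂ →ₗ[ℂ] Matrix (Fin dB) (Fin dB) ℂ)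
    (hM : IsQChannel M) {lmin lmax : ℝ} (hmin : 0 < lmin) (hminmax : lmin ≤ lmax)
    (hbound : ∀ ρ : Matrix (Fin dA) (Fin dA) ℂ, IsDensity ρ →
      (M ρ - (lmin : ℂ) • (1 : Matrix (Fin dB) (Fin dB) ℂ)).PosSemidef ∧
      ((lmax : ℂ) • (1 : Matrix (Fin dB) (Fin dB) ℂ) - M ρ).PosSemidef) :
    ∀ ρ σ : Matrix (Fin dA) (Fin dA) ℂ, IsDensity ρ → IsDensity σ →
      ENNReal.ofReal ((((M ρ - M σ)ᴴ * (M ρ - M σ)).trace.re) / (2 * lmax))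
          ≤ relEnt (M ρ) (M σ) ∧
      relEnt (M ρ) (M σ) ≤
        ENNReal.ofReal ((((M ρ - M σ)ᴴ * (M ρ - M σ)).trace.re) / (2 * lmin)) := by
  intro ρ σ hρ hσ
  set A := M ρ with hAdef
  set B := M σ with hBdef
  obtain ⟨hA1, hA2⟩ := hbound ρ hρ
  obtain ⟨hB1, hB2⟩ := hbound σ hσ
  have hsm : ∀ c : ℝ, ((c:ℂ) • (1 : Matrix (Fin dB) (Fin dB) ℂ)).IsHermitian := by
    intro c
    simp [Matrix.IsHermitian, Matrix.conjTranspose_smul, Complex.star_def, Complex.conj_ofReal]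
  have hAh : A.IsHermitian := by
    have h := hA1.1.add (hsm lmin)
    simpa using h
  have hBh : B.IsHermitian := by
    have h := hB1.1.add (hsm lmin)
    simpa using h
  have haIcc : ∀ i, hAh.eigenvalues i ∈ Set.Icc lmin lmax := eig_mem hAh hA1 hA2
  have hbIcc : ∀ i, hBh.eigenvalues i ∈ Set.Icc lmin lmax := eig_mem hBh hB1 hB2
  -- B is positive definite, hence full support
  have hsmpd : ((lmin:ℂ) • (1 : Matrix (Fin dB) (Fin dB) ℂ)).PosDef := by
    refine Matrix.posDef_iff_dotProduct_mulVec.mpr ⟨hsm lmin, fun x hx => ?_⟩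
    rw [Matrix.smul_mulVec, Matrix.one_mulVec, dotProduct_smul, smul_eq_mul]
    have hpos : 0 < dotProduct (star x) x :=
      Matrix.dotProduct_star_self_pos_iff.mpr hx
    rw [Complex.lt_def] at hpos ⊢
    obtain ⟨hre, him⟩ := hpos
    constructor
    · simp only [Complex.mul_re, Complex.ofReal_re, Complex.ofReal_im, Complex.zero_re] at *
      nlinarith
    · simp only [Complex.mul_im, Complex.ofReal_re, Complex.ofReal_im, Complex.zero_im] at *
      nlinarith
  have hBpd : B.PosDef := by
    have h := Matrix.PosDef.posSemidef_add hB1 hsmpd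
    simpa using h
  have hsupp : supp A ≤ supp B := by
    have hs : supp B = ⊤ := by
      rw [supp, LinearMap.range_eq_top]
      exact Matrix.mulVec_surjective_iff_isUnit.mpr hBpd.isUnit
    rw [hs]; exact le_top
  rw [relEnt, if_pos hsupp]
  -- spectral data
  set U : Matrix (Fin dB) (Fin dB) ℂ := ↑hAh.eigenvectorUnitary with hUdef
  set V : Matrix (Fin dB) (Fin dB) ℂ := ↑hBh.eigenvectorUnitary with hVdef
  set W : Matrix (Fin dB) (Fin dB) ℂ := star U * V with hWdef
  set a : Fin dB → ℝ := hAh.eigenvalues with hadef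
  set b : Fin dB → ℝ := hBh.eigenvalues with hbdef
  set p : Fin dB → Fin dB → ℝ := fun i j => Complex.normSq (W i j) with hpdef
  have hUU : star U * U = 1 := Matrix.UnitaryGroup.star_mul_self _
  have hUUt : U * star U = 1 := (Matrix.mem_unitaryGroup_iff).mp hAh.eigenvectorUnitary.2
  have hVV : star V * V = 1 := Matrix.UnitaryGroup.star_mul_self _
  have hVVt : V * star V = 1 := (Matrix.mem_unitaryGroup_iff).mp hBh.eigenvectorUnitary.2
  have hWW : W * star W = 1 := by
    rw [hWdef, star_mul, star_star, Matrix.mul_assoc, ← Matrix.mul_assoc V (star V) U,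
      hVVt, Matrix.one_mul, hUU]
  have hWsW : star W * W = 1 := by
    rw [hWdef, star_mul, star_star, Matrix.mul_assoc, ← Matrix.mul_assoc U (star U) V,
      hUUt, Matrix.one_mul, hVV]
  have hmc : ∀ i j, W i j * star (W i j) = ((p i j : ℝ) : ℂ) := by
    intro i j
    rw [hpdef, Complex.star_def, Complex.mul_conj]
  have hrow : ∀ i, ∑ j, ((p i j : ℝ) : ℂ) = 1 := by
    intro i
    have h : (W * star W) i i = 1 := by rw [hWW]; simp [Matrix.one_apply]
    rw [Matrix.mul_apply] at h
    rw [← h]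
    apply Finset.sum_congr rfl
    intro j _
    rw [← hmc i j, Matrix.star_apply]
  have hcol : ∀ j, ∑ i, ((p i j : ℝ) : ℂ) = 1 := by
    intro j
    have h : (star W * W) j j = 1 := by rw [hWsW]; simp [Matrix.one_apply]
    rw [Matrix.mul_apply] at h
    rw [← h]
    apply Finset.sum_congr rfl
    intro i _
    rw [← hmc i j, Matrix.star_apply]
    ring
  have hrowR : ∀ i, ∑ j, p i j = 1 := by
    intro i
    have := hrow i
    exact_mod_cast (by push_cast at this ⊢; exact this : ((∑ j, p i j : ℝ) : ℂ) = ((1:ℝ):ℂ))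
  have hcolR : ∀ j, ∑ i, p i j = 1 := by
    intro j
    have := hcol j
    exact_mod_cast (by push_cast at this ⊢; exact this : ((∑ i, p i j : ℝ) : ℂ) = ((1:ℝ):ℂ))
  have hpnn : ∀ i j, 0 ≤ p i j := fun i j => Complex.normSq_nonneg _
  -- spectral decompositions
  have hAspec : A = U * Matrix.diagonal (fun i => (a i : ℂ)) * star U := hAh.spectral_theorem
  have hBspec : B = V * Matrix.diagonal (fun j => (b j : ℂ)) * star V := hBh.spectral_theorem
  have hLA : matLog A = U * Matrix.diagonal (fun i => (Real.log (a i) : ℂ)) * star U := by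
    rw [matLog, dif_pos hAh]
  have hLB : matLog B = V * Matrix.diagonal (fun j => (Real.log (b j) : ℂ)) * star V := by
    rw [matLog, dif_pos hBh]
  -- the four trace formulas
  have sum_one : ∀ f g : Fin dB → ℂ,
      (∑ i, ∑ j, f i * g j * ((1 : Matrix (Fin dB) (Fin dB) ℂ) i j *
        star ((1 : Matrix (Fin dB) (Fin dB) ℂ) i j))) = ∑ i, f i * g i := by
    intro f g
    apply Finset.sum_congr rfl
    intro i _
    rw [Finset.sum_eq_single i]
    · simp [Matrix.one_apply]
    · intro j _ hj
      simp [Matrix.one_apply, Ne.symm hj]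
    · simp
  have T1 : (A * matLog A).trace = ∑ i, (a i : ℂ) * (Real.log (a i) : ℂ) := by
    rw [hLA, hAspec, trace_pair, hUU, sum_one]
  have T2 : (A * matLog B).trace
      = ∑ i, ∑ j, (a i : ℂ) * (Real.log (b j) : ℂ) * ((p i j : ℝ) : ℂ) := by
    rw [hLB, hAspec, trace_pair]
    exact Finset.sum_congr rfl fun i _ => Finset.sum_congr rfl fun j _ => by rw [hmc]
  have T3 : (A * A).trace = ∑ i, (a i : ℂ) * (a i : ℂ) := by
    rw [hAspec, trace_pair, hUU, sum_one]
  have T6 : (B * B).trace = ∑ j, (b j : ℂ) * (b j : ℂ) := by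
    rw [hBspec, trace_pair, hVV, sum_one]
  have T4 : (A * B).trace = ∑ i, ∑ j, (a i : ℂ) * (b j : ℂ) * ((p i j : ℝ) : ℂ) := by
    rw [hAspec, hBspec, trace_pair]
    exact Finset.sum_congr rfl fun i _ => Finset.sum_congr rfl fun j _ => by rw [hmc]
  have T5 : (B * A).trace = ∑ i, ∑ j, (a i : ℂ) * (b j : ℂ) * ((p i j : ℝ) : ℂ) := by
    rw [Matrix.trace_mul_comm, T4]
  -- traces equal one
  have htrA : ∑ i, a i = 1 := by
    have h1 : A.trace = 1 := by rw [hAdef, hM.2 ρ, hρ.2]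
    have h2 : A.trace = ∑ i, (a i : ℂ) := by
      conv_lhs => rw [hAspec]
      rw [Matrix.trace_mul_comm, ← Matrix.mul_assoc, hUU, Matrix.one_mul,
        Matrix.trace_diagonal]
    rw [h2] at h1
    exact_mod_cast (by push_cast; exact h1 : ((∑ i, a i : ℝ) : ℂ) = ((1:ℝ):ℂ))
  have htrB : ∑ j, b j = 1 := by
    have h1 : B.trace = 1 := by rw [hBdef, hM.2 σ, hσ.2]
    have h2 : B.trace = ∑ j, (b j : ℂ) := by
      conv_lhs => rw [hBspec]
      rw [Matrix.trace_mul_comm, ← Matrix.mul_assoc, hVV, Matrix.one_mul,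
        Matrix.trace_diagonal]
    rw [h2] at h1
    exact_mod_cast (by push_cast; exact h1 : ((∑ j, b j : ℝ) : ℂ) = ((1:ℝ):ℂ))
  -- real-valued trace identities
  have hD : (A * (matLog A - matLog B)).trace.re
      = ∑ i, ∑ j, p i j * (a i * (Real.log (a i) - Real.log (b j))) := by
    have h1 : (A * (matLog A - matLog B)).trace = (A * matLog A).trace - (A * matLog B).trace := by
      rw [Matrix.mul_sub, Matrix.trace_sub]
    have h2 : ∑ i, (a i : ℂ) * (Real.log (a i) : ℂ)
        = ∑ i, ∑ j, (a i : ℂ) * (Real.log (a i) : ℂ) * ((p i j : ℝ) : ℂ) := by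
      apply Finset.sum_congr rfl
      intro i _
      rw [← Finset.mul_sum, hrow i, mul_one]
    have h3 : (A * (matLog A - matLog B)).trace
        = ((∑ i, ∑ j, p i j * (a i * (Real.log (a i) - Real.log (b j))) : ℝ) : ℂ) := by
      rw [h1, T1, T2, h2, ← Finset.sum_sub_distrib]
      push_cast
      apply Finset.sum_congr rfl; intro i _
      rw [← Finset.sum_sub_distrib]
      apply Finset.sum_congr rfl; intro j _
      ring
    rw [h3, Complex.ofReal_re]
  have hF : ((A - B)ᴴ * (A - B)).trace.re = ∑ i, ∑ j, p i j * (a i - b j)^2 := by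
    have hherm : (A - B)ᴴ = A - B := hAh.sub hBh
    have hexp : (A - B) * (A - B) = A * A - A * B - B * A + B * B := by noncomm_ring
    have h3a : ∑ i, (a i : ℂ) * (a i : ℂ)
        = ∑ i, ∑ j, (a i : ℂ) * (a i : ℂ) * ((p i j : ℝ) : ℂ) := by
      apply Finset.sum_congr rfl
      intro i _
      rw [← Finset.mul_sum, hrow i, mul_one]
    have h6a : ∑ j, (b j : ℂ) * (b j : ℂ)
        = ∑ i, ∑ j, (b j : ℂ) * (b j : ℂ) * ((p i j : ℝ) : ℂ) := by
      rw [Finset.sum_comm]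
      apply Finset.sum_congr rfl
      intro j _
      rw [← Finset.mul_sum, hcol j, mul_one]
    have h4 : ((A - B)ᴴ * (A - B)).trace
        = ((∑ i, ∑ j, p i j * (a i - b j)^2 : ℝ) : ℂ) := by
      rw [hherm, hexp, Matrix.trace_add, Matrix.trace_sub, Matrix.trace_sub,
        T3, T4, T5, T6, h3a, h6a]
      push_cast
      rw [← Finset.sum_sub_distrib, ← Finset.sum_sub_distrib, ← Finset.sum_add_distrib]
      apply Finset.sum_congr rfl; intro i _
      rw [← Finset.sum_sub_distrib, ← Finset.sum_sub_distrib, ← Finset.sum_add_distrib]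
      apply Finset.sum_congr rfl; intro j _
      ring
    rw [h4, Complex.ofReal_re]
  -- the mean-zero identity
  have hsum0 : ∑ i, ∑ j, p i j * (a i - b j) = 0 := by
    have e1 : ∑ i, ∑ j, p i j * a i = 1 := by
      calc ∑ i, ∑ j, p i j * a i = ∑ i, a i * ∑ j, p i j := by
            apply Finset.sum_congr rfl; intro i _
            rw [Finset.mul_sum]
            apply Finset.sum_congr rfl; intro j _; ring
        _ = ∑ i, a i := by
            apply Finset.sum_congr rfl; intro i _; rw [hrowR i, mul_one]
        _ = 1 := htrA
    have e2 : ∑ i, ∑ j, p i j * b j = 1 := by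
      calc ∑ i, ∑ j, p i j * b j = ∑ j, b j * ∑ i, p i j := by
            rw [Finset.sum_comm]
            apply Finset.sum_congr rfl; intro j _
            rw [Finset.mul_sum]
            apply Finset.sum_congr rfl; intro i _; ring
        _ = ∑ j, b j := by
            apply Finset.sum_congr rfl; intro j _; rw [hcolR j, mul_one]
        _ = 1 := htrB
    have : ∑ i, ∑ j, p i j * (a i - b j)
        = (∑ i, ∑ j, p i j * a i) - ∑ i, ∑ j, p i j * b j := by
      rw [← Finset.sum_sub_distrib]
      apply Finset.sum_congr rfl; intro i _
      rw [← Finset.sum_sub_distrib]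
      apply Finset.sum_congr rfl; intro j _
      ring
    rw [this, e1, e2, sub_self]
  -- the termwise bounds
  have hDφ : ∑ i, ∑ j, p i j * (a i * (Real.log (a i) - Real.log (b j)))
      = ∑ i, ∑ j, p i j * (a i * (Real.log (a i) - Real.log (b j)) - (a i - b j)) := by
    have : ∑ i, ∑ j, p i j * (a i * (Real.log (a i) - Real.log (b j)) - (a i - b j))
        = (∑ i, ∑ j, p i j * (a i * (Real.log (a i) - Real.log (b j))))
          - ∑ i, ∑ j, p i j * (a i - b j) := by
      rw [← Finset.sum_sub_distrib]
      apply Finset.sum_congr rfl; intro i _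
      rw [← Finset.sum_sub_distrib]
      apply Finset.sum_congr rfl; intro j _
      ring
    rw [this, hsum0, sub_zero]
  have hlb : ∑ i, ∑ j, p i j * ((a i - b j)^2 / (2*lmax))
      ≤ ∑ i, ∑ j, p i j * (a i * (Real.log (a i) - Real.log (b j)) - (a i - b j)) := by
    apply Finset.sum_le_sum; intro i _
    apply Finset.sum_le_sum; intro j _
    exact mul_le_mul_of_nonneg_left (scalar_bounds hmin (haIcc i) (hbIcc j)).1 (hpnn i j)
  have hub : ∑ i, ∑ j, p i j * (a i * (Real.log (a i) - Real.log (b j)) - (a i - b j))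
      ≤ ∑ i, ∑ j, p i j * ((a i - b j)^2 / (2*lmin)) := by
    apply Finset.sum_le_sum; intro i _
    apply Finset.sum_le_sum; intro j _
    exact mul_le_mul_of_nonneg_left (scalar_bounds hmin (haIcc i) (hbIcc j)).2 (hpnn i j)
  have hdivsum : ∀ c : ℝ, ∑ i, ∑ j, p i j * ((a i - b j)^2 / (2*c))
      = (∑ i, ∑ j, p i j * (a i - b j)^2) / (2*c) := by
    intro c
    rw [Finset.sum_div]
    apply Finset.sum_congr rfl; intro i _
    rw [Finset.sum_div]
    apply Finset.sum_congr rfl; intro j _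
    ring
  constructor
  · apply ENNReal.ofReal_le_ofReal
    rw [hF, hD, hDφ, ← hdivsum lmax]
    exact hlb
  · apply ENNReal.ofReal_le_ofReal
    rw [hF, hD, hDφ, ← hdivsum lmin]
    exact hub


end RDPI
end
end

section
/- Let X ∈ M_d(ℂ) be a traceless Hermitian matrix and let σ be any density matrix on ℂ^d. Then (‖X‖₁)² ≤ g_σ(X), where ‖X‖₁ = Tr√(X†X) is the trace norm and g is the BKM metric (the inequality is understood in [0,∞]; in particular it holds trivially when supp(X) ⊄ supp(σ), where g_σ(X) = +∞). -/
open scoped Matrix ENNReal ComplexOrder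

noncomputable section

namespace RDPI

/-- The trace norm `‖X‖₁ = Tr √(X†X)`. -/
def traceNorm {d d' : ℕ} (X : Matrix (Fin d) (Fin d') ℂ) : ℝ :=
  ((Matrix.posSemidef_conjTranspose_mul_self X).1.eigenvectorUnitary.1 *
    Matrix.diagonal (((↑) : ℝ → ℂ) ∘ Real.sqrt ∘ (Matrix.posSemidef_conjTranspose_mul_self X).1.eigenvalues) *
    (star (Matrix.posSemidef_conjTranspose_mul_self X).1.eigenvectorUnitary :
      Matrix (Fin d') (Fin d') ℂ)).trace.re

/-! ### Auxiliary material for Statement 19 -/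

section Aux

open MeasureTheory Set Filter Matrix

variable {d : ℕ} {σ : Matrix (Fin d) (Fin d) ℂ}

private lemma tendA (c : ℝ) : Tendsto (fun r : ℝ => -(c + r)⁻¹) atTop (nhds 0) := by
  have : Tendsto (fun r : ℝ => c + r) atTop atTop := tendsto_atTop_add_const_left _ _ tendsto_id
  simpa using (this.inv_tendsto_atTop).neg

private lemma derivA (c : ℝ) (hc : 0 < c) :
    ∀ x ∈ Ici (0:ℝ), HasDerivAt (fun r => -(c + r)⁻¹) (((c + x)^2)⁻¹) x := by
  intro x hx
  have hx0 : (0:ℝ) ≤ x := hx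
  have hne : c + x ≠ 0 := by positivity
  have h1 : HasDerivAt (fun r : ℝ => c + r) 1 x := (hasDerivAt_id x).const_add c
  have := (h1.inv hne).neg
  exact this.congr_deriv (by rw [neg_div, neg_neg, one_div])

private lemma intA (c : ℝ) (hc : 0 < c) : IntegrableOn (fun x => ((c + x)^2)⁻¹) (Ioi (0:ℝ)) :=
  integrableOn_Ioi_deriv_of_nonneg' (derivA c hc) (fun x hx => by positivity) (tendA c)

private lemma valA (c : ℝ) (hc : 0 < c) : ∫ r in Ioi (0:ℝ), ((c + r)^2)⁻¹ = c⁻¹ := by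
  rw [integral_Ioi_of_hasDerivAt_of_tendsto' (derivA c hc) (intA c hc) (tendA c)]
  simp

/-- AM–GM based lower bound on the BKM kernel integral. -/
private lemma lemA (a b : ℝ) (ha : 0 ≤ a) (hb : 0 ≤ b) (hab : 0 < a + b) :
    ENNReal.ofReal (((a+b)/2)⁻¹) ≤ ∫⁻ r in Ioi (0:ℝ), ENNReal.ofReal ((a+r)⁻¹*(b+r)⁻¹) := by
  set c := (a+b)/2 with hcdef
  have hc : 0 < c := by positivity
  calc ENNReal.ofReal c⁻¹ = ∫⁻ r in Ioi (0:ℝ), ENNReal.ofReal (((c+r)^2)⁻¹) := by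
        rw [← valA c hc, ← ofReal_integral_eq_lintegral_ofReal (intA c hc)]
        exact Filter.Eventually.of_forall fun x => by positivity
    _ ≤ _ := by
        apply lintegral_mono_ae
        rw [ae_restrict_iff' measurableSet_Ioi]
        refine Filter.Eventually.of_forall fun r hr => ENNReal.ofReal_le_ofReal ?_
        have hr0 : (0:ℝ) < r := hr
        have hprod : (a+r)*(b+r) ≤ (c+r)^2 := by nlinarith [sq_nonneg (a-b)]
        have hpos : 0 < (a+r)*(b+r) := by positivity
        rw [← mul_inv]
        exact inv_anti₀ hpos hprod

/-- Divergence lower bound for the kernel at a pair of zero eigenvalues. -/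
private lemma lemB (M : ℝ) :
    ENNReal.ofReal M ≤ ∫⁻ r in Ioi (0:ℝ), ENNReal.ofReal (r⁻¹*r⁻¹) := by
  rcases le_or_gt M 0 with hM | hM
  · simp [ENNReal.ofReal_of_nonpos hM]
  set ε := M⁻¹ with hε
  have hε0 : 0 < ε := by positivity
  calc ENNReal.ofReal M = ENNReal.ofReal (ε⁻¹*ε⁻¹) * ENNReal.ofReal ε := by
        rw [← ENNReal.ofReal_mul (by positivity)]
        congr 1
        rw [hε]; field_simp
    _ = ∫⁻ _ in Ioc (0:ℝ) ε, ENNReal.ofReal (ε⁻¹*ε⁻¹) := by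
        rw [setLIntegral_const, Real.volume_Ioc]
        simp
    _ ≤ ∫⁻ r in Ioc (0:ℝ) ε, ENNReal.ofReal (r⁻¹*r⁻¹) := by
        apply setLIntegral_mono_ae (by fun_prop)
        refine Filter.Eventually.of_forall fun r hr => ENNReal.ofReal_le_ofReal ?_
        have h1 : 0 < r := hr.1
        have h2 : r ≤ ε := hr.2
        gcongr
    _ ≤ _ := lintegral_mono_set Ioc_subset_Ioi_self

private lemma trace_diag (Y : Matrix (Fin d) (Fin d) ℂ) (v w : Fin d → ℝ) :
    (Yᴴ * Matrix.diagonal (fun i => ((v i : ℝ):ℂ)) * Y *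
      Matrix.diagonal (fun i => ((w i : ℝ):ℂ))).trace.re
    = ∑ i, ∑ k, ‖Y k i‖^2 * (v k * w i) := by
  have hz : ∀ (z : ℂ), (starRingEnd ℂ) z * z = ((‖z‖^2 : ℝ) : ℂ) := by
    intro z
    rw [mul_comm, Complex.mul_conj]
    norm_cast
    rw [Complex.sq_norm]
  have hA : ∀ i, (Yᴴ * Matrix.diagonal (fun i => ((v i:ℝ):ℂ)) * Y) i i
      = ∑ k, ((‖Y k i‖^2 * v k : ℝ) : ℂ) := by
    intro i
    rw [Matrix.mul_assoc, Matrix.mul_apply]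
    congr 1; funext k
    simp only [Matrix.diagonal_mul, Matrix.conjTranspose_apply]
    rw [show star (Y k i) = (starRingEnd ℂ) (Y k i) from rfl]
    calc (starRingEnd ℂ) (Y k i) * (↑(v k) * Y k i)
        = ((starRingEnd ℂ) (Y k i) * Y k i) * ↑(v k) := by ring
      _ = _ := by rw [hz]; push_cast; ring
  have h : (Yᴴ * Matrix.diagonal (fun i => ((v i:ℝ):ℂ)) * Y *
      Matrix.diagonal (fun i => ((w i:ℝ):ℂ))).trace
      = ∑ i, ∑ k, ((‖Y k i‖^2 * (v k * w i) : ℝ) : ℂ) := by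
    simp only [Matrix.trace, Matrix.diag_apply, Matrix.mul_diagonal]
    congr 1; funext i
    rw [hA, Finset.sum_mul]
    congr 1; funext k
    push_cast; ring
  rw [h]
  simp [Complex.re_sum, ← Complex.ofReal_pow]

private lemma conj_decomp (hσ : σ.IsHermitian) (r : ℝ) :
    σ + (r:ℂ) • 1 = (hσ.eigenvectorUnitary : Matrix (Fin d) (Fin d) ℂ) *
      Matrix.diagonal (fun i => ((hσ.eigenvalues i + r : ℝ) : ℂ)) *
      star (hσ.eigenvectorUnitary : Matrix (Fin d) (Fin d) ℂ) := by
  set U := (hσ.eigenvectorUnitary : Matrix (Fin d) (Fin d) ℂ) with hU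
  have hUU : U * star U = 1 := Matrix.mem_unitaryGroup_iff.mp hσ.eigenvectorUnitary.2
  have h1 : Matrix.diagonal (fun i => ((hσ.eigenvalues i + r : ℝ) : ℂ)) =
      Matrix.diagonal (fun i => ((hσ.eigenvalues i : ℝ) : ℂ)) +
        Matrix.diagonal (fun _ => (r:ℂ)) := by
    rw [Matrix.diagonal_add]
    congr 1; funext i; push_cast; ring
  rw [h1, Matrix.mul_add, Matrix.add_mul]
  congr 1
  · exact hσ.spectral_theorem
  · have h2 : Matrix.diagonal (fun _ : Fin d => (r:ℂ)) = (r:ℂ) • 1 := by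
      ext i j
      by_cases h : i = j <;> simp [h, Matrix.one_apply, Matrix.diagonal_apply]
    rw [h2, Matrix.mul_smul, Matrix.smul_mul, mul_one, hUU]

private lemma inv_decomp (hσ : σ.PosSemidef) {r : ℝ} (hr : 0 < r) :
    (σ + (r:ℂ) • 1)⁻¹ = (hσ.1.eigenvectorUnitary : Matrix (Fin d) (Fin d) ℂ) *
      Matrix.diagonal (fun i => (((hσ.1.eigenvalues i + r)⁻¹ : ℝ) : ℂ)) *
      star (hσ.1.eigenvectorUnitary : Matrix (Fin d) (Fin d) ℂ) := by
  set U := (hσ.1.eigenvectorUnitary : Matrix (Fin d) (Fin d) ℂ) with hU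
  have hUU : U * star U = 1 := Matrix.mem_unitaryGroup_iff.mp hσ.1.eigenvectorUnitary.2
  have hsUU : star U * U = 1 := Matrix.mem_unitaryGroup_iff'.mp hσ.1.eigenvectorUnitary.2
  apply Matrix.inv_eq_right_inv
  rw [conj_decomp hσ.1 r]
  calc (U * Matrix.diagonal (fun i => ((hσ.1.eigenvalues i + r : ℝ) : ℂ)) * star U) *
        (U * Matrix.diagonal (fun i => (((hσ.1.eigenvalues i + r)⁻¹ : ℝ) : ℂ)) * star U)
      = U * (Matrix.diagonal (fun i => ((hσ.1.eigenvalues i + r : ℝ) : ℂ)) *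
          Matrix.diagonal (fun i => (((hσ.1.eigenvalues i + r)⁻¹ : ℝ) : ℂ))) * star U := by
        simp only [Matrix.mul_assoc]
        rw [← Matrix.mul_assoc (star U) U, hsUU, Matrix.one_mul]
    _ = 1 := by
        rw [Matrix.diagonal_mul_diagonal]
        have : (fun i => ((hσ.1.eigenvalues i + r : ℝ) : ℂ) *
            (((hσ.1.eigenvalues i + r)⁻¹ : ℝ) : ℂ)) = fun _ => (1:ℂ) := by
          funext i
          rw [← Complex.ofReal_mul, mul_inv_cancel₀]
          · simp
          · have := hσ.eigenvalues_nonneg i; positivity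
        rw [this, Matrix.diagonal_one, Matrix.mul_one, hUU]

private lemma integrand_eq (hσ : σ.PosSemidef) (X : Matrix (Fin d) (Fin d) ℂ) {r : ℝ}
    (hr : 0 < r) :
    (Xᴴ * (σ + (r:ℂ) • 1)⁻¹ * X * (σ + (r:ℂ) • 1)⁻¹).trace.re
    = ∑ i, ∑ k, ‖(star (hσ.1.eigenvectorUnitary : Matrix (Fin d) (Fin d) ℂ) * X *
        (hσ.1.eigenvectorUnitary : Matrix (Fin d) (Fin d) ℂ)) k i‖^2 *
        ((hσ.1.eigenvalues k + r)⁻¹ * (hσ.1.eigenvalues i + r)⁻¹) := by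
  set U := (hσ.1.eigenvectorUnitary : Matrix (Fin d) (Fin d) ℂ) with hUdef
  have hUU : U * star U = 1 := Matrix.mem_unitaryGroup_iff.mp hσ.1.eigenvectorUnitary.2
  have hsUU : star U * U = 1 := Matrix.mem_unitaryGroup_iff'.mp hσ.1.eigenvectorUnitary.2
  set Y := star U * X * U with hYdef
  set D := Matrix.diagonal (fun i => (((hσ.1.eigenvalues i + r)⁻¹ : ℝ) : ℂ)) with hDdef
  have cancel : ∀ A : Matrix (Fin d) (Fin d) ℂ, A * star U * U = A := fun A => by
    rw [Matrix.mul_assoc, hsUU, Matrix.mul_one]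
  have hXe : X = U * Y * star U := by
    rw [hYdef]
    calc X = (U * star U) * X * (U * star U) := by rw [hUU, Matrix.one_mul, Matrix.mul_one]
      _ = U * (star U * X * U) * star U := by simp only [Matrix.mul_assoc]
  have hXH : Xᴴ = U * Yᴴ * star U := by
    conv_lhs => rw [hXe]
    simp only [Matrix.conjTranspose_mul, Matrix.conjTranspose_conjTranspose,
      Matrix.star_eq_conjTranspose]
    simp only [← Matrix.mul_assoc]
  have key : Xᴴ * (σ + (r:ℂ) • 1)⁻¹ * X * (σ + (r:ℂ) • 1)⁻¹ = U * (Yᴴ * D * Y * D) * star U := by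
    rw [inv_decomp hσ hr, ← hUdef, ← hDdef, hXH]
    conv_lhs => rw [hXe]
    simp only [← Matrix.mul_assoc]
    rw [cancel, cancel, cancel]
  rw [key]
  have htr : (U * (Yᴴ * D * Y * D) * star U).trace = (Yᴴ * D * Y * D).trace := by
    rw [Matrix.trace_mul_cycle, ← Matrix.mul_assoc, hsUU, Matrix.one_mul]
  rw [htr, hDdef]
  exact trace_diag Y _ _

private lemma bkm_eq (hσ : σ.PosSemidef) (X : Matrix (Fin d) (Fin d) ℂ) :
    bkm σ X = ∑ i, ∑ k,
      ENNReal.ofReal (‖(star (hσ.1.eigenvectorUnitary : Matrix (Fin d) (Fin d) ℂ) * X *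
        (hσ.1.eigenvectorUnitary : Matrix (Fin d) (Fin d) ℂ)) k i‖^2) *
      ∫⁻ r in Set.Ioi (0:ℝ),
        ENNReal.ofReal ((hσ.1.eigenvalues k + r)⁻¹ * (hσ.1.eigenvalues i + r)⁻¹) := by
  set Y := star (hσ.1.eigenvectorUnitary : Matrix (Fin d) (Fin d) ℂ) * X *
      (hσ.1.eigenvectorUnitary : Matrix (Fin d) (Fin d) ℂ) with hYdef
  set lam := hσ.1.eigenvalues with hlam
  have hlamnn : ∀ i, 0 ≤ lam i := hσ.eigenvalues_nonneg
  have hmeas : ∀ i k : Fin d, Measurable (fun r : ℝ =>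
      ENNReal.ofReal ((lam k + r)⁻¹ * (lam i + r)⁻¹)) := by
    intro i k
    exact ENNReal.measurable_ofReal.comp
      ((measurable_const.add measurable_id).inv.mul (measurable_const.add measurable_id).inv)
  have step1 : bkm σ X = ∫⁻ r in Set.Ioi (0:ℝ),
      ∑ i, ∑ k, ENNReal.ofReal (‖Y k i‖^2) *
        ENNReal.ofReal ((lam k + r)⁻¹ * (lam i + r)⁻¹) := by
    unfold bkm
    apply setLIntegral_congr_fun measurableSet_Ioi
    intro r hr
    have hr0 : (0:ℝ) < r := hr
    beta_reduce
    rw [integrand_eq hσ X hr0]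
    have hterm : ∀ i k : Fin d, 0 ≤ (lam k + r)⁻¹ * (lam i + r)⁻¹ := by
      intro i k
      have h1 := hlamnn k
      have h2 := hlamnn i
      positivity
    rw [ENNReal.ofReal_sum_of_nonneg (fun i _ => Finset.sum_nonneg fun k _ =>
      mul_nonneg (by positivity) (hterm i k))]
    congr 1; funext i
    rw [ENNReal.ofReal_sum_of_nonneg (fun k _ => mul_nonneg (by positivity) (hterm i k))]
    congr 1; funext k
    rw [ENNReal.ofReal_mul (by positivity)]
  rw [step1]
  rw [lintegral_finset_sum' _ (fun i _ => (Finset.measurable_sum _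
    (fun k _ => ((hmeas i k).const_mul _))).aemeasurable)]
  congr 1; funext i
  rw [lintegral_finset_sum' _ (fun k _ => ((hmeas i k).const_mul _).aemeasurable)]
  congr 1; funext k
  rw [lintegral_const_mul _ (hmeas i k)]

private lemma Y_herm (X U : Matrix (Fin d) (Fin d) ℂ) (hX : X.IsHermitian) :
    (star U * X * U).IsHermitian := by
  unfold Matrix.IsHermitian
  simp only [Matrix.conjTranspose_mul, Matrix.conjTranspose_conjTranspose,
    Matrix.star_eq_conjTranspose, hX.eq]
  simp only [← Matrix.mul_assoc]

private lemma conj_unitary_herm (V : Matrix (Fin d) (Fin d) ℂ) (f : Fin d → ℝ) :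
    (V * Matrix.diagonal (fun k => ((f k : ℝ) : ℂ)) * star V).IsHermitian := by
  unfold Matrix.IsHermitian
  simp only [Matrix.conjTranspose_mul, Matrix.conjTranspose_conjTranspose,
    Matrix.star_eq_conjTranspose, Matrix.diagonal_conjTranspose]
  have : star (fun k => ((f k : ℝ) : ℂ)) = fun k => ((f k : ℝ) : ℂ) := by
    funext k; simp [Complex.conj_ofReal]
  rw [this]
  simp only [← Matrix.mul_assoc]

open scoped MatrixOrder in
private lemma traceNorm_eq_sum_abs_eigen {X : Matrix (Fin d) (Fin d) ℂ}
    {W : Matrix (Fin d) (Fin d) ℂ} (hWW : W * star W = 1) (hsWW : star W * W = 1)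
    (e : Fin d → ℝ) (hXe : X = W * Matrix.diagonal (fun k => ((e k : ℝ) : ℂ)) * star W) :
    traceNorm X = ∑ k, |e k| := by
  set Q := W * Matrix.diagonal (fun k => ((|e k| : ℝ) : ℂ)) * star W with hQ
  have hQpsd : Q.PosSemidef := by
    rw [hQ]
    have h1 : (Matrix.diagonal (fun k => ((|e k| : ℝ) : ℂ))).PosSemidef := by
      rw [Matrix.posSemidef_diagonal_iff]
      intro k
      exact_mod_cast abs_nonneg (e k)
    simpa [Matrix.star_eq_conjTranspose] using h1.mul_mul_conjTranspose_same W
  have hsq : Q ^ 2 = Xᴴ * X := by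
    have hXX : Xᴴ * X = W * Matrix.diagonal (fun k => ((e k * e k : ℝ) : ℂ)) * star W := by
      rw [hXe]
      have hXh : (W * Matrix.diagonal (fun k => ((e k:ℝ):ℂ)) * star W)ᴴ
          = W * Matrix.diagonal (fun k => ((e k:ℝ):ℂ)) * star W := conj_unitary_herm W e
      rw [hXh]
      calc (W * Matrix.diagonal (fun k => ((e k:ℝ):ℂ)) * star W) *
            (W * Matrix.diagonal (fun k => ((e k:ℝ):ℂ)) * star W)
          = W * (Matrix.diagonal (fun k => ((e k:ℝ):ℂ)) *
              Matrix.diagonal (fun k => ((e k:ℝ):ℂ))) * star W := by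
            simp only [Matrix.mul_assoc]
            rw [← Matrix.mul_assoc (star W) W, hsWW, Matrix.one_mul]
        _ = _ := by
            rw [Matrix.diagonal_mul_diagonal]
            congr 2
            funext k; push_cast; ring
    rw [hXX, hQ, pow_two]
    calc (W * Matrix.diagonal (fun k => ((|e k|:ℝ):ℂ)) * star W) *
          (W * Matrix.diagonal (fun k => ((|e k|:ℝ):ℂ)) * star W)
        = W * (Matrix.diagonal (fun k => ((|e k|:ℝ):ℂ)) *
            Matrix.diagonal (fun k => ((|e k|:ℝ):ℂ))) * star W := by
          simp only [Matrix.mul_assoc]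
          rw [← Matrix.mul_assoc (star W) W, hsWW, Matrix.one_mul]
      _ = _ := by
          rw [Matrix.diagonal_mul_diagonal]
          have hfun : (fun i => ((|e i|:ℝ):ℂ) * ((|e i|:ℝ):ℂ))
              = fun k => ((e k * e k : ℝ):ℂ) := by
            funext k
            norm_cast
            exact abs_mul_abs_self _
          rw [hfun]
  have hR : ((Matrix.posSemidef_conjTranspose_mul_self X).1.eigenvectorUnitary.1 *
      Matrix.diagonal (((↑) : ℝ → ℂ) ∘ Real.sqrt ∘
        (Matrix.posSemidef_conjTranspose_mul_self X).1.eigenvalues) *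
      (star (Matrix.posSemidef_conjTranspose_mul_self X).1.eigenvectorUnitary :
        Matrix (Fin d) (Fin d) ℂ)) = Q := by
    have h1 : ((Matrix.posSemidef_conjTranspose_mul_self X).1.eigenvectorUnitary.1 *
        Matrix.diagonal (((↑) : ℝ → ℂ) ∘ Real.sqrt ∘
          (Matrix.posSemidef_conjTranspose_mul_self X).1.eigenvalues) *
        (star (Matrix.posSemidef_conjTranspose_mul_self X).1.eigenvectorUnitary :
          Matrix (Fin d) (Fin d) ℂ)) = cfc Real.sqrt (Xᴴ * X) := by
      rw [(Matrix.posSemidef_conjTranspose_mul_self X).1.cfc_eq]; rfl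
    rw [h1, ← cfcₙ_eq_cfc (f := Real.sqrt) (a := Xᴴ * X), ← CFC.sqrt_eq_real_sqrt (Xᴴ * X)
      (Matrix.posSemidef_conjTranspose_mul_self X).nonneg, ← hsq, CFC.sqrt_sq Q hQpsd.nonneg]
  unfold traceNorm
  rw [hR, hQ]
  rw [Matrix.trace_mul_cycle, hsWW, Matrix.one_mul, Matrix.trace_diagonal]
  rw [Complex.re_sum]
  simp

end Aux

open MeasureTheory Set Filter Matrix in
/-- the squared trace norm of a traceless Hermitian matrix lower bounds the
BKM metric at any density matrix. -/
theorem traceNorm_sq_le_bkm {d : ℕ} (X : Matrix (Fin d) (Fin d) ℂ)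
    (hX : X.IsHermitian) (hXtr : X.trace = 0)
    (σ : Matrix (Fin d) (Fin d) ℂ) (hσ : IsDensity σ) :
    ENNReal.ofReal ((traceNorm X)^2) ≤ bkm σ X := by
  classical
  obtain ⟨hσpsd, hσtr⟩ := hσ
  set hH : σ.IsHermitian := hσpsd.1 with hHdef
  set U := (hH.eigenvectorUnitary : Matrix (Fin d) (Fin d) ℂ) with hUdef
  have hUU : U * star U = 1 := Matrix.mem_unitaryGroup_iff.mp hH.eigenvectorUnitary.2
  have hsUU : star U * U = 1 := Matrix.mem_unitaryGroup_iff'.mp hH.eigenvectorUnitary.2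
  set lam := hH.eigenvalues with hlamdef
  have hlamnn : ∀ i, 0 ≤ lam i := hσpsd.eigenvalues_nonneg
  have hlamsum : ∑ i, lam i = 1 := by
    have htr : σ.trace = ∑ i, ((lam i : ℝ) : ℂ) := by
      conv_lhs => rw [hH.spectral_theorem, Unitary.conjStarAlgAut_apply]
      rw [Matrix.trace_mul_cycle]
      rw [show star (hH.eigenvectorUnitary : Matrix (Fin d) (Fin d) ℂ) *
        (hH.eigenvectorUnitary : Matrix (Fin d) (Fin d) ℂ) = 1 from hsUU]
      rw [Matrix.one_mul, Matrix.trace_diagonal]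
      simp [Function.comp, hlamdef]
    rw [hσtr] at htr
    exact_mod_cast htr.symm
  set Y := star U * X * U with hYdef
  have hY : Y.IsHermitian := Y_herm X U hX
  have hYnorm : ∀ i k, ‖Y k i‖ = ‖Y i k‖ := by
    intro i k
    conv_lhs => rw [← hY.eq]
    simp [Matrix.conjTranspose_apply]
  set T := traceNorm X with hTdef
  rw [bkm_eq hσpsd X]
  by_cases hzero : ∃ p : Fin d × Fin d, lam p.1 = 0 ∧ lam p.2 = 0 ∧ Y p.2 p.1 ≠ 0
  · -- divergent branch
    obtain ⟨⟨i, k⟩, h1, h2, h3⟩ := hzero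
    have hc : (0:ℝ) < ‖Y k i‖^2 := pow_pos (norm_pos_iff.mpr h3) 2
    have hstep : ENNReal.ofReal (‖Y k i‖^2) *
        (∫⁻ r in Set.Ioi (0:ℝ),
          ENNReal.ofReal ((lam k + r)⁻¹ * (lam i + r)⁻¹)) ≤
        ∑ i', ∑ k', ENNReal.ofReal (‖Y k' i'‖^2) *
          ∫⁻ r in Set.Ioi (0:ℝ),
            ENNReal.ofReal ((lam k' + r)⁻¹ * (lam i' + r)⁻¹) := by
      calc _ ≤ ∑ k', ENNReal.ofReal (‖Y k' i‖^2) *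
            ∫⁻ r in Set.Ioi (0:ℝ),
              ENNReal.ofReal ((lam k' + r)⁻¹ * (lam i + r)⁻¹) :=
          Finset.single_le_sum (f := fun k' => ENNReal.ofReal (‖Y k' i‖^2) *
            ∫⁻ r in Set.Ioi (0:ℝ), ENNReal.ofReal ((lam k' + r)⁻¹ * (lam i + r)⁻¹))
            (fun _ _ => zero_le) (Finset.mem_univ k)
        _ ≤ _ :=
          Finset.single_le_sum (f := fun i' => ∑ k', ENNReal.ofReal (‖Y k' i'‖^2) *
            ∫⁻ r in Set.Ioi (0:ℝ), ENNReal.ofReal ((lam k' + r)⁻¹ * (lam i' + r)⁻¹))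
            (fun _ _ => zero_le) (Finset.mem_univ i)
    refine le_trans ?_ hstep
    have hK : ENNReal.ofReal (T^2 / ‖Y k i‖^2) ≤
        ∫⁻ r in Set.Ioi (0:ℝ), ENNReal.ofReal ((lam k + r)⁻¹ * (lam i + r)⁻¹) := by
      have : ∀ r : ℝ, (lam k + r)⁻¹ * (lam i + r)⁻¹ = r⁻¹ * r⁻¹ := by
        intro r; rw [h2, h1, zero_add]
      simp_rw [this]
      exact lemB _
    calc ENNReal.ofReal (T^2)
        = ENNReal.ofReal (‖Y k i‖^2) * ENNReal.ofReal (T^2 / ‖Y k i‖^2) := by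
          rw [← ENNReal.ofReal_mul (le_of_lt hc)]
          congr 1
          rw [eq_comm, mul_comm]
          exact div_mul_cancel₀ _ (ne_of_gt hc)
      _ ≤ _ := by gcongr
  · -- main branch
    push_neg at hzero
    -- construct the sign matrix S
    set V := (hY.eigenvectorUnitary : Matrix (Fin d) (Fin d) ℂ) with hVdef
    have hVV : V * star V = 1 := Matrix.mem_unitaryGroup_iff.mp hY.eigenvectorUnitary.2
    have hsVV : star V * V = 1 := Matrix.mem_unitaryGroup_iff'.mp hY.eigenvectorUnitary.2
    set e := hY.eigenvalues with hedef
    set s : Fin d → ℝ := fun k => if e k < 0 then (-1:ℝ) else 1 with hsdef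
    set S := V * Matrix.diagonal (fun k => ((s k : ℝ) : ℂ)) * star V with hSdef
    have hSherm : S.IsHermitian := conj_unitary_herm V s
    have hSS : S * S = 1 := by
      rw [hSdef]
      calc (V * Matrix.diagonal (fun k => ((s k:ℝ):ℂ)) * star V) *
            (V * Matrix.diagonal (fun k => ((s k:ℝ):ℂ)) * star V)
          = V * (Matrix.diagonal (fun k => ((s k:ℝ):ℂ)) *
              Matrix.diagonal (fun k => ((s k:ℝ):ℂ))) * star V := by
            simp only [Matrix.mul_assoc]
            rw [← Matrix.mul_assoc (star V) V, hsVV, Matrix.one_mul]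
        _ = 1 := by
            rw [Matrix.diagonal_mul_diagonal]
            have : (fun k => ((s k:ℝ):ℂ) * ((s k:ℝ):ℂ)) = fun _ => (1:ℂ) := by
              funext k
              rw [hsdef]
              by_cases h : e k < 0 <;> simp [h]
            rw [this, Matrix.diagonal_one, Matrix.mul_one, hVV]
    have hYe : Y = V * Matrix.diagonal (fun k => ((e k : ℝ) : ℂ)) * star V := by
      have := hY.spectral_theorem
      rw [Unitary.conjStarAlgAut_apply] at this
      exact this
    have hXe : X = (U * V) * Matrix.diagonal (fun k => ((e k : ℝ) : ℂ)) * star (U * V) := by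
      have hXY : X = U * Y * star U := by
        rw [hYdef]
        calc X = (U * star U) * X * (U * star U) := by
              rw [hUU, Matrix.one_mul, Matrix.mul_one]
          _ = U * (star U * X * U) * star U := by simp only [Matrix.mul_assoc]
      rw [hXY, hYe, Matrix.star_mul]
      simp only [Matrix.mul_assoc]
    have hWW : (U * V) * star (U * V) = 1 := by
      rw [Matrix.star_mul]
      calc U * V * (star V * star U) = U * (V * star V) * star U := by
            simp only [Matrix.mul_assoc]
        _ = 1 := by rw [hVV, Matrix.mul_one, hUU]
    have hsWW : star (U * V) * (U * V) = 1 := by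
      rw [Matrix.star_mul]
      calc star V * star U * (U * V) = star V * (star U * U) * V := by
            simp only [Matrix.mul_assoc]
        _ = 1 := by rw [hsUU, Matrix.mul_one, hsVV]
    have hTsum : T = ∑ k, |e k| := traceNorm_eq_sum_abs_eigen hWW hsWW e hXe
    have hT0 : 0 ≤ T := hTsum ▸ Finset.sum_nonneg fun k _ => abs_nonneg _
    have hSY : (S * Y).trace.re = T := by
      have hprod : S * Y = V * Matrix.diagonal (fun k => ((|e k| : ℝ) : ℂ)) * star V := by
        rw [hSdef, hYe]
        calc (V * Matrix.diagonal (fun k => ((s k:ℝ):ℂ)) * star V) *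
              (V * Matrix.diagonal (fun k => ((e k:ℝ):ℂ)) * star V)
            = V * (Matrix.diagonal (fun k => ((s k:ℝ):ℂ)) *
                Matrix.diagonal (fun k => ((e k:ℝ):ℂ))) * star V := by
              simp only [Matrix.mul_assoc]
              rw [← Matrix.mul_assoc (star V) V, hsVV, Matrix.one_mul]
          _ = _ := by
              rw [Matrix.diagonal_mul_diagonal]
              have hfun : (fun i => ((s i:ℝ):ℂ) * ((e i:ℝ):ℂ)) = fun k => ((|e k|:ℝ):ℂ) := by
                funext k
                rw [← Complex.ofReal_mul]
                congr 1
                simp only [hsdef]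
                by_cases h : e k < 0
                · rw [if_pos h, abs_of_neg h]; ring
                · rw [if_neg h, abs_of_nonneg (not_lt.mp h)]; ring
              rw [hfun]
      rw [hprod, Matrix.trace_mul_cycle, hsVV, Matrix.one_mul,
        Matrix.trace_diagonal, Complex.re_sum, hTsum]
      simp
    -- entrywise bound on T
    have hT1 : T ≤ ∑ i, ∑ k, ‖S i k‖ * ‖Y k i‖ := by
      rw [← hSY]
      have : (S * Y).trace = ∑ i, ∑ k, S i k * Y k i := by
        simp [Matrix.trace, Matrix.diag_apply, Matrix.mul_apply]
      rw [this, Complex.re_sum]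
      apply Finset.sum_le_sum
      intro i _
      rw [Complex.re_sum]
      apply Finset.sum_le_sum
      intro k _
      calc (S i k * Y k i).re ≤ ‖S i k * Y k i‖ := Complex.re_le_norm _
        _ = ‖S i k‖ * ‖Y k i‖ := norm_mul _ _
    -- row/column sums of |S|² equal 1
    have hScol : ∀ k, ∑ i, ‖S i k‖^2 = 1 := by
      intro k
      have h1 : (S * S) k k = ∑ i, ((‖S i k‖^2 : ℝ) : ℂ) := by
        rw [Matrix.mul_apply]
        congr 1; funext i
        have : S k i = (starRingEnd ℂ) (S i k) := by
          conv_lhs => rw [← hSherm.eq]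
          rfl
        rw [this, mul_comm, Complex.mul_conj]
        norm_cast
        rw [Complex.sq_norm]
      have h2 : (S * S) k k = 1 := by rw [hSS]; simp [Matrix.one_apply]
      have h3 : ∑ i, ((‖S i k‖^2 : ℝ) : ℂ) = 1 := by rw [← h1, h2]
      exact_mod_cast h3
    have hSrow : ∀ i, ∑ k, ‖S i k‖^2 = 1 := by
      intro i
      have h1 : (S * S) i i = ∑ k, ((‖S i k‖^2 : ℝ) : ℂ) := by
        rw [Matrix.mul_apply]
        congr 1; funext k
        have : S k i = (starRingEnd ℂ) (S i k) := by
          conv_lhs => rw [← hSherm.eq]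
          rfl
        rw [this, Complex.mul_conj]
        norm_cast
        rw [Complex.sq_norm]
      have h2 : (S * S) i i = 1 := by rw [hSS]; simp [Matrix.one_apply]
      have h3 : ∑ k, ((‖S i k‖^2 : ℝ) : ℂ) = 1 := by rw [← h1, h2]
      exact_mod_cast h3
    -- Cauchy–Schwarz
    set wt : Fin d × Fin d → ℝ := fun p => (lam p.2 + lam p.1)/2 with hwt
    have hwtnn : ∀ p, 0 ≤ wt p := fun p => by
      have := hlamnn p.1; have := hlamnn p.2; rw [hwt]; positivity
    set f : Fin d × Fin d → ℝ := fun p => ‖Y p.2 p.1‖ * Real.sqrt ((wt p)⁻¹) with hf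
    set g : Fin d × Fin d → ℝ := fun p => ‖S p.1 p.2‖ * Real.sqrt (wt p) with hg
    have hfg : ∀ p, ‖S p.1 p.2‖ * ‖Y p.2 p.1‖ = f p * g p := by
      intro p
      rcases eq_or_lt_of_le (hwtnn p) with hw0 | hwpos
      · have hl1 : lam p.1 = 0 := by
          have h1 := hlamnn p.1; have h2 := hlamnn p.2
          rw [hwt] at hw0; simp only at hw0
          linarith [hw0.symm]
        have hl2 : lam p.2 = 0 := by
          have h1 := hlamnn p.1; have h2 := hlamnn p.2
          rw [hwt] at hw0; simp only at hw0
          linarith [hw0.symm]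
        have hY0 : Y p.2 p.1 = 0 := hzero p hl1 hl2
        show ‖S p.1 p.2‖ * ‖Y p.2 p.1‖ = (‖Y p.2 p.1‖ * Real.sqrt ((wt p)⁻¹)) *
          (‖S p.1 p.2‖ * Real.sqrt (wt p))
        simp [hY0]
      · have hwne : Real.sqrt (wt p) ≠ 0 := by
          rw [Real.sqrt_ne_zero' ]; exact hwpos
        show ‖S p.1 p.2‖ * ‖Y p.2 p.1‖ = (‖Y p.2 p.1‖ * Real.sqrt ((wt p)⁻¹)) *
          (‖S p.1 p.2‖ * Real.sqrt (wt p))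
        rw [Real.sqrt_inv]
        field_simp
    have hCS : (∑ p : Fin d × Fin d, f p * g p)^2 ≤
        (∑ p : Fin d × Fin d, (f p)^2) * (∑ p : Fin d × Fin d, (g p)^2) :=
      Finset.sum_mul_sq_le_sq_mul_sq _ _ _
    have hg1 : ∑ p : Fin d × Fin d, (g p)^2 = 1 := by
      have : ∀ p : Fin d × Fin d, (g p)^2 = ‖S p.1 p.2‖^2 * wt p := by
        intro p
        show (‖S p.1 p.2‖ * Real.sqrt (wt p))^2 = _
        rw [mul_pow, Real.sq_sqrt (hwtnn p)]
      rw [Finset.sum_congr rfl fun p _ => this p]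
      rw [Fintype.sum_prod_type]
      have expand : ∀ i : Fin d, ∑ k, ‖S i k‖^2 * wt (i, k)
          = (∑ k, ‖S i k‖^2 * lam k)/2 + lam i/2 := by
        intro i
        have hterm : ∀ k, ‖S i k‖^2 * wt (i, k)
            = (‖S i k‖^2 * lam k)/2 + ‖S i k‖^2 * (lam i/2) := by
          intro k
          show ‖S i k‖^2 * ((lam (i,k).2 + lam (i,k).1)/2) = _
          ring
        rw [Finset.sum_congr rfl fun k _ => hterm k, Finset.sum_add_distrib,
          ← Finset.sum_div, ← Finset.sum_mul, hSrow i]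
        ring
      rw [Finset.sum_congr rfl fun i _ => expand i]
      rw [Finset.sum_add_distrib, ← Finset.sum_div, ← Finset.sum_div, hlamsum]
      have hcol : ∑ i, ∑ k, ‖S i k‖^2 * lam k = 1 := by
        rw [Finset.sum_comm]
        calc ∑ k, ∑ i, ‖S i k‖^2 * lam k = ∑ k, lam k * ∑ i, ‖S i k‖^2 := by
              congr 1; funext k
              rw [Finset.mul_sum]
              congr 1; funext i; ring
          _ = 1 := by
              rw [Finset.sum_congr rfl fun k _ => by rw [hScol k, mul_one], hlamsum]
      rw [hcol]
      norm_num
    have hTsq : T^2 ≤ ∑ p : Fin d × Fin d, (f p)^2 := by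
      have hT2 : T ≤ ∑ p : Fin d × Fin d, f p * g p := by
        rw [← Finset.sum_congr rfl fun p _ => (hfg p)]
        rw [Fintype.sum_prod_type]
        exact hT1
      calc T^2 ≤ (∑ p : Fin d × Fin d, f p * g p)^2 := by
            apply pow_le_pow_left₀ hT0 hT2
        _ ≤ (∑ p : Fin d × Fin d, (f p)^2) * (∑ p : Fin d × Fin d, (g p)^2) := hCS
        _ = _ := by rw [hg1, mul_one]
    -- conclude in ℝ≥0∞
    have hfsq : ∀ p : Fin d × Fin d, (f p)^2 = ‖Y p.2 p.1‖^2 * (wt p)⁻¹ := by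
      intro p
      show (‖Y p.2 p.1‖ * Real.sqrt ((wt p)⁻¹))^2 = _
      rw [mul_pow, Real.sq_sqrt (inv_nonneg.mpr (hwtnn p))]
    calc ENNReal.ofReal (T^2)
        ≤ ENNReal.ofReal (∑ p : Fin d × Fin d, (f p)^2) := ENNReal.ofReal_le_ofReal hTsq
      _ = ∑ p : Fin d × Fin d, ENNReal.ofReal ((f p)^2) :=
          ENNReal.ofReal_sum_of_nonneg fun p _ => sq_nonneg _
      _ = ∑ i, ∑ k, ENNReal.ofReal (‖Y k i‖^2 * (wt (i,k))⁻¹) := by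
          rw [Fintype.sum_prod_type]
          congr 1; funext i
          congr 1; funext k
          rw [hfsq]
      _ ≤ ∑ i, ∑ k, ENNReal.ofReal (‖Y k i‖^2) *
            ∫⁻ r in Set.Ioi (0:ℝ),
              ENNReal.ofReal ((lam k + r)⁻¹ * (lam i + r)⁻¹) := by
          apply Finset.sum_le_sum
          intro i _
          apply Finset.sum_le_sum
          intro k _
          rcases eq_or_lt_of_le (hwtnn (i,k)) with hw0 | hwpos
          · have hl1 : lam i = 0 := by
              have h1 := hlamnn i; have h2 := hlamnn k
              rw [hwt] at hw0; simp only at hw0; linarith [hw0.symm]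
            have hl2 : lam k = 0 := by
              have h1 := hlamnn i; have h2 := hlamnn k
              rw [hwt] at hw0; simp only at hw0; linarith [hw0.symm]
            have hY0 : Y k i = 0 := hzero (i,k) hl1 hl2
            simp [hY0]
          · rw [ENNReal.ofReal_mul (by positivity)]
            apply mul_le_mul_right _ _
            have := lemA (lam k) (lam i) (hlamnn k) (hlamnn i)
              (by rw [hwt] at hwpos; simp only at hwpos; linarith)
            exact this
end RDPI
end
end
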